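/- arXiv:2209.03925 — 8 statements merged into one kernel-verified Lean document; each statement's English description precedes it below -/
import Mathlib

section
/- There is a one-to-one correspondence (bijection) between the set of multisets of size n with elements in Z/nZ whose sum is congruent to n(n-1)/2 modulo n, and the set of n-element subsets of {1, 2, ..., 2n-1} whose element sum is divisible by n. -/
namespace EGZaux

def toA : ℕ → List ℕ → List ℕ
  | _, [] => []
  | k, x :: xs => (x + k) :: toA (k+1) xs

def toB : ℕ → List ℕ → List ℕ
  | _, [] => []
  | k, x :: xs => (x - k) :: toB (k+1) xs

@[simp] lemma toA_nil (k : ℕ) : toA k [] = [] := rfl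
@[simp] lemma toA_cons (k x : ℕ) (xs : List ℕ) : toA k (x::xs) = (x+k) :: toA (k+1) xs := rfl
@[simp] lemma toB_nil (k : ℕ) : toB k [] = [] := rfl
@[simp] lemma toB_cons (k x : ℕ) (xs : List ℕ) : toB k (x::xs) = (x-k) :: toB (k+1) xs := rfl

lemma length_toA : ∀ (k : ℕ) (l : List ℕ), (toA k l).length = l.length
  | _, [] => rfl
  | k, x :: xs => by simp [length_toA (k+1) xs]

lemma length_toB : ∀ (k : ℕ) (l : List ℕ), (toB k l).length = l.length
  | _, [] => rfl
  | k, x :: xs => by simp [length_toB (k+1) xs]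

lemma toB_toA : ∀ (k : ℕ) (b : List ℕ), toB k (toA k b) = b
  | _, [] => rfl
  | k, x :: xs => by simp [toB_toA (k+1) xs]

lemma toA_toB : ∀ (k : ℕ) (l : List ℕ), l.Pairwise (· < ·) → (∀ y ∈ l, k ≤ y) →
    toA k (toB k l) = l
  | _, [], _, _ => rfl
  | k, x :: xs, hs, hk => by
    have h1 : x - k + k = x := Nat.sub_add_cancel (hk x (by simp))
    have h2 : ∀ y ∈ xs, k + 1 ≤ y := fun y hy =>
      Nat.succ_le_of_lt (lt_of_le_of_lt (hk x (by simp)) ((List.pairwise_cons.mp hs).1 y hy))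
    simp [toA_toB (k+1) xs (List.pairwise_cons.mp hs).2 h2, h1]

lemma sum_toA : ∀ (k : ℕ) (b : List ℕ), (toA k b).sum = b.sum + b.length * k + b.length.choose 2
  | _, [] => by simp
  | k, x :: xs => by
    have h := sum_toA (k+1) xs
    have hc : (xs.length + 1).choose 2 = xs.length.choose 1 + xs.length.choose 2 :=
      Nat.choose_succ_succ _ _
    simp only [toA_cons, List.sum_cons, List.length_cons, h, hc, Nat.choose_one_right]
    ring

lemma toA_lower : ∀ (k : ℕ) (b : List ℕ) (m : ℕ), (∀ z ∈ b, m ≤ z) →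
    ∀ y ∈ toA k b, m + k ≤ y
  | _, [], _, _ => by simp
  | k, x :: xs, m, h => by
    intro y hy
    rcases hy with _ | hy
    · exact Nat.add_le_add (h x (by simp)) le_rfl
    · have := toA_lower (k+1) xs m (fun z hz => h z (by simp [hz])) y (by assumption)
      omega

lemma toA_upper : ∀ (k : ℕ) (b : List ℕ) (c : ℕ), (∀ z ∈ b, z < c) →
    ∀ y ∈ toA k b, y + 1 < c + k + b.length
  | _, [], _, _ => by simp
  | k, x :: xs, c, h => by
    intro y hy
    rcases hy with _ | hy
    · have := h x (by simp); simp; omega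
    · have := toA_upper (k+1) xs c (fun z hz => h z (by simp [hz])) y (by assumption)
      simp; omega

lemma sorted_lt_toA : ∀ (k : ℕ) (b : List ℕ), b.Pairwise (· ≤ ·) → (toA k b).Pairwise (· < ·)
  | _, [], _ => by simp
  | k, x :: xs, hs => by
    rw [toA_cons, List.pairwise_cons]
    refine ⟨fun y hy => ?_, sorted_lt_toA (k+1) xs (List.pairwise_cons.mp hs).2⟩
    have := toA_lower (k+1) xs x (List.pairwise_cons.mp hs).1 y hy
    omega

lemma toB_lower : ∀ (k : ℕ) (l : List ℕ) (m : ℕ), l.Pairwise (· < ·) → (∀ y ∈ l, m + k ≤ y) →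
    ∀ z ∈ toB k l, m ≤ z
  | _, [], _, _, _ => by simp
  | k, x :: xs, m, hs, h => by
    intro z hz
    simp only [toB_cons, List.mem_cons] at hz
    rcases hz with rfl | hz
    · have := h x (by simp); omega
    · exact toB_lower (k+1) xs m (List.pairwise_cons.mp hs).2
        (fun y hy => by have := (List.pairwise_cons.mp hs).1 y hy
                        have := h x (by simp); omega) z hz

lemma sorted_le_toB : ∀ (k : ℕ) (l : List ℕ), l.Pairwise (· < ·) → (∀ y ∈ l, k ≤ y) →
    (toB k l).Pairwise (· ≤ ·)
  | _, [], _, _ => by simp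
  | k, x :: xs, hs, hk => by
    rw [toB_cons, List.pairwise_cons]
    have hx : k ≤ x := hk x (by simp)
    have hxs : ∀ y ∈ xs, x < y := (List.pairwise_cons.mp hs).1
    refine ⟨fun z hz => ?_, sorted_le_toB (k+1) xs (List.pairwise_cons.mp hs).2
      (fun y hy => by have := hxs y hy; omega)⟩
    exact toB_lower (k+1) xs (x - k) (List.pairwise_cons.mp hs).2
      (fun y hy => by have := hxs y hy; omega) z hz

lemma getElem_toB : ∀ (l : List ℕ) (k i : ℕ) (h : i < (toB k l).length),
    (toB k l)[i] = l[i]'(by rwa [length_toB] at h) - (k + i)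
  | x :: xs, k, 0, h => by simp
  | x :: xs, k, i + 1, h => by
    have := getElem_toB xs (k+1) i (by simpa using h)
    simpa [this] using by omega

lemma sorted_getElem_add {l : List ℕ} (hl : l.Pairwise (· < ·)) :
    ∀ (d i : ℕ) (h : i + d < l.length), l[i]'(by omega) + d ≤ l[i+d] := by
  intro d
  induction d with
  | zero => intro i h; simp
  | succ d ih =>
    intro i h
    have h1 := ih i (by omega)
    have h2 : l[i+d]'(by omega) < l[i+d+1] := by
      have := List.pairwise_iff_getElem.mp hl (i+d) (i+d+1) (by omega) (by omega) (by omega)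
      exact this
    have heq : l[i+(d+1)]'(by omega) = l[i+d+1]'(by omega) := rfl
    omega

end EGZaux

namespace EGZaux

lemma two_choose_cast (n : ℕ) : ((n.choose 2 : ℕ) : ZMod n) + (n.choose 2 : ℕ) = 0 := by
  have h2 : 2 * n.choose 2 = n * (n - 1) := by
    rw [Nat.choose_two_right, Nat.mul_div_cancel' (Nat.even_mul_pred_self n).two_dvd]
  have h3 : ((2 * n.choose 2 : ℕ) : ZMod n) = 0 := by
    rw [h2]
    exact (ZMod.natCast_eq_zero_iff _ n).mpr ⟨n - 1, rfl⟩
  push_cast at h3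
  linear_combination h3

lemma sum_mk (l : List ℕ) (h : (↑l : Multiset ℕ).Nodup) :
    ∑ a ∈ (⟨↑l, h⟩ : Finset ℕ), a = l.sum := by
  rw [← Finset.sum_map_val, Multiset.map_coe, Multiset.sum_coe, List.map_id']

lemma sort_sum (A : Finset ℕ) : (A.sort (· ≤ ·)).sum = ∑ a ∈ A, a := by
  have h : (↑(A.sort (· ≤ ·)) : Multiset ℕ) = A.1 := Finset.sort_eq _ _
  have := congrArg Multiset.sum h
  rw [Multiset.sum_coe] at this
  rw [this, ← Finset.sum_map_val]
  congr 1
  exact (Multiset.map_id' _).symm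

lemma toB_lt {l : List ℕ} (hl : l.Pairwise (· < ·)) {n : ℕ} (hlen : l.length = n)
    (hub : ∀ y ∈ l, y ≤ 2 * n - 1) (hn : 1 ≤ n) : ∀ z ∈ toB 1 l, z < n := by
  intro z hz
  obtain ⟨i, hi, rfl⟩ := List.mem_iff_getElem.mp hz
  rw [getElem_toB]
  have hi' : i < n := by rw [length_toB, hlen] at hi; exact hi
  have h1 := sorted_getElem_add hl (n - 1 - i) i (by omega)
  have h2 := hub (l[i + (n - 1 - i)]'(by omega)) (List.getElem_mem _)
  omega

lemma map_val_cast {n : ℕ} [NeZero n] (M : Multiset (ZMod n)) :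
    (M.map ZMod.val).map (Nat.cast : ℕ → ZMod n) = M := by
  rw [Multiset.map_map]
  refine Eq.trans (Multiset.map_congr rfl fun a _ => ?_) (Multiset.map_id M)
  exact ZMod.natCast_rightInverse a

end EGZaux

set_option linter.unusedSectionVars false

namespace EGZaux

variable (n : ℕ) [NeZero n]

def fwdL (M : Multiset (ZMod n)) : List ℕ := toA 1 ((M.map ZMod.val).sort (· ≤ ·))

lemma fwdL_sorted (M : Multiset (ZMod n)) : (fwdL n M).Pairwise (· < ·) :=
  sorted_lt_toA 1 _ (Multiset.pairwise_sort _ _)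

lemma fwdL_nodup (M : Multiset (ZMod n)) : (↑(fwdL n M) : Multiset ℕ).Nodup := by
  rw [Multiset.coe_nodup]; exact (fwdL_sorted n M).nodup

def fwdF (M : Multiset (ZMod n)) : Finset ℕ := ⟨↑(fwdL n M), fwdL_nodup n M⟩

lemma fwdL_length (M : Multiset (ZMod n)) (hM : Multiset.card M = n) :
    (fwdL n M).length = n := by
  rw [fwdL, length_toA, Multiset.length_sort, Multiset.card_map, hM]

lemma fwd_subset (M : Multiset (ZMod n)) (hM : Multiset.card M = n) :
    fwdF n M ⊆ Finset.Icc 1 (2 * n - 1) := by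
  intro y hy
  have hy' : y ∈ fwdL n M := by
    simpa [fwdF, Finset.mem_mk, Multiset.mem_coe] using hy
  have h1 := toA_lower 1 _ 0 (fun z _ => Nat.zero_le z) y hy'
  have h2 := toA_upper 1 _ n (fun z hz => by
      have hz' : z ∈ M.map ZMod.val := (Multiset.mem_sort _).mp hz
      obtain ⟨a, _, rfl⟩ := Multiset.mem_map.mp hz'
      exact ZMod.val_lt a) y hy'
  rw [Multiset.length_sort, Multiset.card_map, hM] at h2
  have hn1 : 1 ≤ n := Nat.pos_of_ne_zero (NeZero.ne n)
  rw [Finset.mem_Icc]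
  omega

lemma fwd_card (M : Multiset (ZMod n)) (hM : Multiset.card M = n) :
    (fwdF n M).card = n := by
  rw [fwdF, Finset.card_mk, Multiset.coe_card, fwdL_length n M hM]

lemma sort_val_sum_cast (M : Multiset (ZMod n)) (hsum : M.sum = (n.choose 2 : ZMod n)) :
    ((((M.map ZMod.val).sort (· ≤ ·)).sum : ℕ) : ZMod n) = ((n.choose 2 : ℕ) : ZMod n) := by
  have hcoe : (↑((M.map ZMod.val).sort (· ≤ ·)) : Multiset ℕ) = M.map ZMod.val :=
    Multiset.sort_eq _ _
  have h1 : (((M.map ZMod.val).sort (· ≤ ·)).sum : ℕ) = (M.map ZMod.val).sum := by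
    rw [← Multiset.sum_coe, hcoe]
  rw [h1, Nat.cast_multiset_sum, map_val_cast, hsum]

lemma fwd_dvd (M : Multiset (ZMod n)) (hM : Multiset.card M = n)
    (hsum : M.sum = (n.choose 2 : ZMod n)) : n ∣ ∑ a ∈ fwdF n M, a := by
  rw [fwdF, sum_mk]
  have hlen : ((M.map ZMod.val).sort (· ≤ ·)).length = n := by
    rw [Multiset.length_sort, Multiset.card_map, hM]
  have hs : (fwdL n M).sum
      = ((M.map ZMod.val).sort (· ≤ ·)).sum + n * 1 + n.choose 2 := by
    rw [fwdL, sum_toA, hlen]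
  rw [← ZMod.natCast_eq_zero_iff, hs]
  push_cast
  rw [ZMod.natCast_self]
  have h2 := sort_val_sum_cast n M hsum
  push_cast at h2
  rw [h2]
  have := two_choose_cast n
  push_cast at this ⊢
  linear_combination this

def bwdM (A : Finset ℕ) : Multiset (ZMod n) :=
  ((toB 1 (A.sort (· ≤ ·)) : List ℕ) : Multiset ℕ).map (Nat.cast : ℕ → ZMod n)

lemma bwd_card (A : Finset ℕ) (hA : A.card = n) : Multiset.card (bwdM n A) = n := by
  rw [bwdM, Multiset.card_map, Multiset.coe_card, length_toB, Finset.length_sort, hA]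

lemma sort_mem_bounds (A : Finset ℕ) (hsub : A ⊆ Finset.Icc 1 (2 * n - 1)) :
    ∀ y ∈ A.sort (· ≤ ·), 1 ≤ y ∧ y ≤ 2 * n - 1 := by
  intro y hy
  have := Finset.mem_Icc.mp (hsub ((Finset.mem_sort _).mp hy))
  exact this

lemma bwd_sum (A : Finset ℕ) (hsub : A ⊆ Finset.Icc 1 (2 * n - 1)) (hcard : A.card = n)
    (hdvd : n ∣ ∑ a ∈ A, a) : (bwdM n A).sum = (n.choose 2 : ZMod n) := by
  set l := A.sort (· ≤ ·) with hl
  have hsl : l.Pairwise (· < ·) := A.sortedLT_sort.pairwise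
  have hmem : ∀ y ∈ l, 1 ≤ y := fun y hy => (sort_mem_bounds n A hsub y hy).1
  have hlen : (toB 1 l).length = n := by rw [length_toB, hl, Finset.length_sort, hcard]
  have hsum : l.sum = (toB 1 l).sum + n * 1 + n.choose 2 := by
    conv_lhs => rw [← toA_toB 1 l hsl hmem]
    rw [sum_toA, hlen]
  have hdl : n ∣ l.sum := by rw [hl, sort_sum]; exact hdvd
  have h0 : ((l.sum : ℕ) : ZMod n) = 0 := (ZMod.natCast_eq_zero_iff _ n).mpr hdl
  rw [hsum] at h0
  push_cast at h0
  rw [ZMod.natCast_self] at h0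
  have hM : (bwdM n A).sum = (((toB 1 l).sum : ℕ) : ZMod n) := by
    rw [bwdM, Multiset.map_coe, Multiset.sum_coe, ← Nat.cast_list_sum]
  rw [hM]
  have h2 := two_choose_cast n
  push_cast at h2 h0 ⊢
  linear_combination h0 - h2

lemma left_inv (M : Multiset (ZMod n)) : bwdM n (fwdF n M) = M := by
  have hsle : (fwdL n M).Pairwise (· ≤ ·) := (fwdL_sorted n M).imp fun h => le_of_lt h
  have step1 : (fwdF n M).sort (· ≤ ·) = fwdL n M :=
    List.Perm.eq_of_pairwise' (Finset.pairwise_sort _ _) hsle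
      (Multiset.coe_eq_coe.mp (by rw [Finset.sort_eq]; rfl))
  rw [bwdM, step1, fwdL, toB_toA, Multiset.sort_eq, map_val_cast]

lemma right_inv (A : Finset ℕ) (hsub : A ⊆ Finset.Icc 1 (2 * n - 1)) (hcard : A.card = n) :
    fwdF n (bwdM n A) = A := by
  set l := A.sort (· ≤ ·) with hl
  have hn1 : 1 ≤ n := Nat.pos_of_ne_zero (NeZero.ne n)
  have hsl : l.Pairwise (· < ·) := A.sortedLT_sort.pairwise
  have hmem : ∀ y ∈ l, 1 ≤ y := fun y hy => (sort_mem_bounds n A hsub y hy).1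
  have hub : ∀ y ∈ l, y ≤ 2 * n - 1 := fun y hy => (sort_mem_bounds n A hsub y hy).2
  have hlenl : l.length = n := by rw [hl, Finset.length_sort, hcard]
  have hblt : ∀ z ∈ toB 1 l, z < n := toB_lt hsl hlenl hub hn1
  have step1 : (bwdM n A).map ZMod.val = (↑(toB 1 l) : Multiset ℕ) := by
    rw [bwdM, Multiset.map_map]
    refine Eq.trans (Multiset.map_congr rfl fun z hz => ?_) (Multiset.map_id _)
    exact ZMod.val_cast_of_lt (hblt z (Multiset.mem_coe.mp hz))
  have step2 : ((bwdM n A).map ZMod.val).sort (· ≤ ·) = toB 1 l := by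
    rw [step1]
    exact List.Perm.eq_of_pairwise'
      (Multiset.pairwise_sort _ _)
      (sorted_le_toB 1 l hsl hmem)
      (Multiset.coe_eq_coe.mp (Multiset.sort_eq _ _))
  have step3 : fwdL n (bwdM n A) = l := by
    rw [fwdL, step2, toA_toB 1 l hsl hmem]
  apply Finset.eq_of_veq
  show (↑(fwdL n (bwdM n A)) : Multiset ℕ) = A.1
  rw [step3, hl, Finset.sort_eq]

end EGZaux

open EGZaux in
/-- Bijection between `EGZ_n` (multisets of size `n` over `ZMod n` with sum `binom n 2`)
and `n`-element subsets of `[1, 2n-1]` with sum divisible by `n`. -/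
theorem egz_equiv_subsets (n : ℕ) (hn : 1 ≤ n) :
    Nonempty
      ({M : Multiset (ZMod n) // Multiset.card M = n ∧ M.sum = (n.choose 2 : ZMod n)} ≃
       {A : Finset ℕ // A ⊆ Finset.Icc 1 (2 * n - 1) ∧ A.card = n ∧ n ∣ ∑ a ∈ A, a}) := by
  haveI : NeZero n := ⟨by omega⟩
  exact ⟨{
    toFun := fun M =>
      ⟨fwdF n M.1, fwd_subset n M.1 M.2.1, fwd_card n M.1 M.2.1, fwd_dvd n M.1 M.2.1 M.2.2⟩
    invFun := fun A =>
      ⟨bwdM n A.1, bwd_card n A.1 A.2.2.1, bwd_sum n A.1 A.2.1 A.2.2.1 A.2.2.2⟩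
    left_inv := fun M => Subtype.ext (left_inv n M.1)
    right_inv := fun A => Subtype.ext (right_inv n A.1 A.2.1 A.2.2.1) }⟩
end

section
/- Let s = (s_0, ..., s_{n-1}) be a score sequence of length n (i.e., a nondecreasing sequence of nonnegative integers with s_0 + ... + s_{k-1} ≥ binomial(k,2) for all 1 ≤ k < n and total sum binomial(n,2)). If s_0 + ... + s_{k-1} = binomial(k,2) for some k < n, then u = (s_0, ..., s_{k-1}) is a score sequence of length k and v = (s_k - k, ..., s_{n-1} - k) is a score sequence of length n - k. -/
/-- A score sequence: nondecreasing, entries in `[0, n-1]`, prefix sums at least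
`binom k 2`, and total sum `binom n 2`. -/
def IsScoreSeq (s : List ℕ) : Prop :=
  s.Pairwise (· ≤ ·) ∧ (∀ x ∈ s, x < s.length) ∧
    (∀ k, 0 < k → k < s.length → k.choose 2 ≤ (s.take k).sum) ∧
    s.sum = s.length.choose 2

/-- A strong score sequence: nonempty and all proper prefix-sum inequalities strict. -/
def IsStrongScoreSeq (s : List ℕ) : Prop :=
  IsScoreSeq s ∧ s ≠ [] ∧ ∀ k, 0 < k → k < s.length → k.choose 2 < (s.take k).sum

/-- Direct sum of score sequences: concatenate `u` with `v` shifted up by `u.length`. -/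
def dsum (u v : List ℕ) : List ℕ := u ++ v.map (· + u.length)

/-- Iterated direct sum of a list of score sequences. -/
def dsumAll (ts : List (List ℕ)) : List ℕ := ts.foldl dsum []

/-- `s + j`: entries shifted by `j`, reduced modulo the length, sorted nondecreasingly. -/
def shift (s : List ℕ) (j : ℕ) : List ℕ :=
  Multiset.sort ((s.map fun x => (x + j) % s.length : List ℕ) : Multiset ℕ) (· ≤ ·)


lemma chooseSucc (n : ℕ) : (n + 1).choose 2 = n.choose 2 + n := by
  have h := Nat.choose_succ_succ n 1
  simpa [Nat.choose_one_right, Nat.add_comm] using h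

lemma chooseAdd (k m : ℕ) : (k + m).choose 2 = k.choose 2 + m.choose 2 + k * m := by
  induction m with
  | zero => simp
  | succ m ih =>
    rw [show k + (m + 1) = (k + m) + 1 by ring, chooseSucc, chooseSucc, Nat.mul_succ]
    omega

lemma sumMapSub (l : List ℕ) (k : ℕ) (h : ∀ x ∈ l, k ≤ x) :
    (l.map (· - k)).sum + l.length * k = l.sum := by
  induction l with
  | nil => simp
  | cons a t ih =>
    simp only [List.map_cons, List.sum_cons, List.length_cons]
    have ha := h a (by simp)
    have := ih (fun x hx => h x (by simp [hx]))
    rw [Nat.add_mul, one_mul]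
    omega

/-- If a prefix sum of a score sequence meets the bound `binom k 2` exactly, the
sequence splits as a direct sum of two score sequences. -/
theorem scoreSeq_split (s : List ℕ) (hs : IsScoreSeq s) (k : ℕ) (hk : k < s.length)
    (heq : (s.take k).sum = k.choose 2) :
    IsScoreSeq (s.take k) ∧ IsScoreSeq ((s.drop k).map (· - k)) := by
  obtain ⟨hsort, hlt, hpre, hsum⟩ := hs
  have hk1 : ∀ m, m ≤ s.length → m.choose 2 ≤ (s.take m).sum := by
    intro m hm
    rcases Nat.eq_zero_or_pos m with h0 | h0
    · simp [h0]
    rcases lt_or_eq_of_le hm with h | h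
    · exact hpre m h0 h
    · rw [h, List.take_length, hsum]
  have hgetk : k ≤ s[k] := by
    have h1 := hk1 (k + 1) hk
    rw [List.sum_take_succ s k hk, heq, chooseSucc] at h1
    omega
  have hdropk : ∀ x ∈ s.drop k, k ≤ x := by
    intro x hx
    rw [List.drop_eq_getElem_cons hk] at hx
    rcases List.mem_cons.mp hx with h | h
    · omega
    · have hsd : (s.drop k).Pairwise (· ≤ ·) := hsort.sublist (List.drop_sublist k s)
      rw [List.drop_eq_getElem_cons hk, List.pairwise_cons] at hsd
      exact le_trans hgetk (hsd.1 x h)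
  have hlentake : (s.take k).length = k := by
    rw [List.length_take]; omega
  constructor
  · refine ⟨hsort.sublist (List.take_sublist k s), ?_, ?_, ?_⟩
    · intro x hx
      rw [hlentake]
      have hk0 : 0 < k := by
        rcases Nat.eq_zero_or_pos k with h | h
        · simp [h] at hx
        · exact h
      obtain ⟨i, hi, hix⟩ := List.mem_iff_getElem.mp hx
      rw [hlentake] at hi
      have hik : i < s.length := by omega
      have hgx : (s.take k)[i]'(by omega) = s[i] := List.getElem_take ..
      have hle : s[i] ≤ s[k-1]'(by omega) := hsort.rel_get_of_le (Fin.mk_le_mk.mpr (by omega))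
      have hsk1 : s[k-1]'(by omega) ≤ k - 1 := by
        have h2 := List.sum_take_succ s (k-1) (by omega)
        rw [show k - 1 + 1 = k by omega, heq] at h2
        have h3 := hk1 (k-1) (by omega)
        have h4 : k.choose 2 = (k-1).choose 2 + (k-1) := by
          have h5 := chooseSucc (k-1)
          rw [show k - 1 + 1 = k by omega] at h5
          exact h5
        omega
      omega
    · intro j hj hjlen
      rw [hlentake] at hjlen
      rw [List.take_take, min_eq_left (le_of_lt hjlen)]
      exact hpre j hj (by omega)
    · rw [heq, hlentake]
  · have hlenv : ((s.drop k).map (· - k)).length = s.length - k := by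
      simp
    have hsortv : ((s.drop k).map (· - k)).Pairwise (· ≤ ·) := by
      have hsd : (s.drop k).Pairwise (· ≤ ·) := hsort.sublist (List.drop_sublist k s)
      exact List.Pairwise.map _ (fun a b hab => Nat.sub_le_sub_right hab k) hsd
    have htakev : ∀ m, m ≤ s.length - k →
        (((s.drop k).map (· - k)).take m).sum + m * k + k.choose 2 = (s.take (k + m)).sum := by
      intro m hm
      rw [← List.map_take]
      have hall : ∀ x ∈ (s.drop k).take m, k ≤ x := fun x hx =>
        hdropk x (List.mem_of_mem_take hx)
      have hlen : ((s.drop k).take m).length = m := by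
        rw [List.length_take, List.length_drop]; omega
      have h1 := sumMapSub ((s.drop k).take m) k hall
      rw [hlen] at h1
      have h2 : s.take (k + m) = s.take k ++ (s.drop k).take m := List.take_add (l := s) (i := k) (j := m)
      rw [h2, List.sum_append, heq]
      omega
    refine ⟨hsortv, ?_, ?_, ?_⟩
    · intro x hx
      rw [hlenv]
      obtain ⟨y, hy, hyx⟩ := List.mem_map.mp hx
      have h1 : y < s.length := hlt y (List.mem_of_mem_drop hy)
      have h2 : k ≤ y := hdropk y hy
      omega
    · intro m hm hmlen
      rw [hlenv] at hmlen
      have h1 := htakev m (by omega)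
      have h2 := hk1 (k + m) (by omega)
      have h3 := chooseAdd k m
      have hkm : k * m = m * k := Nat.mul_comm k m
      omega
    · rw [hlenv]
      have h1 := htakev (s.length - k) (le_refl _)
      rw [show k + (s.length - k) = s.length by omega, List.take_length,
        List.take_of_length_le (by rw [hlenv])] at h1
      have h3 := chooseAdd k (s.length - k)
      rw [show k + (s.length - k) = s.length by omega] at h3
      have h4 := Nat.mul_comm k (s.length - k)
      omega
end

section
/- Every nonempty score sequence can be written uniquely as a direct sum t_1 ⊕ t_2 ⊕ ... ⊕ t_k of nonempty strong score sequences. -/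
private lemma choose_two_succ (m : ℕ) : (m + 1).choose 2 = m.choose 2 + m := by
  have := Nat.choose_succ_succ m 1
  simp [Nat.choose_one_right] at this
  omega

private lemma choose_two_add (a b : ℕ) : (a + b).choose 2 = a.choose 2 + a * b + b.choose 2 := by
  induction b with
  | zero => simp
  | succ b ih =>
    have h1 := choose_two_succ (a + b)
    have h2 := choose_two_succ b
    have : a + (b + 1) = (a + b) + 1 := by omega
    rw [this, Nat.mul_succ]
    omega

private lemma dsum_nil (v : List ℕ) : dsum [] v = v := by simp [dsum]

private lemma dsum_nil_right (u : List ℕ) : dsum u [] = u := by simp [dsum]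

private lemma dsum_assoc (a b c : List ℕ) : dsum (dsum a b) c = dsum a (dsum b c) := by
  simp only [dsum, List.map_append, List.map_map, List.append_assoc, List.length_append,
    List.length_map]
  congr 2
  apply List.map_congr_left
  intro x _
  simp [Function.comp]
  omega

private lemma foldl_dsum (ts : List (List ℕ)) :
    ∀ x, List.foldl dsum x ts = dsum x (List.foldl dsum [] ts) := by
  induction ts with
  | nil => intro x; simp [dsum_nil_right]
  | cons a l ih =>
    intro x
    simp only [List.foldl_cons, dsum_nil]
    rw [ih (dsum x a), ih a, dsum_assoc]

private lemma dsumAll_cons (t : List ℕ) (ts : List (List ℕ)) :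
    dsumAll (t :: ts) = dsum t (dsumAll ts) := by
  simp only [dsumAll, List.foldl_cons, dsum_nil]
  exact foldl_dsum ts t

private lemma sum_map_sub (k : ℕ) : ∀ (l : List ℕ), (∀ x ∈ l, k ≤ x) →
    (l.map (· - k)).sum + k * l.length = l.sum := by
  intro l
  induction l with
  | nil => simp
  | cons a l ih =>
    intro h
    have ha := h a (by simp)
    have := ih (fun x hx => h x (by simp [hx]))
    simp only [List.map_cons, List.sum_cons, List.length_cons, Nat.mul_succ]
    omega

private lemma key : ∀ n (s : List ℕ), s.length ≤ n → IsScoreSeq s → s ≠ [] →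
    ∃! ts : List (List ℕ), (∀ t ∈ ts, IsStrongScoreSeq t) ∧ dsumAll ts = s := by
  intro n
  induction n with
  | zero =>
    intro s hl _ hne
    exact absurd (List.length_eq_zero_iff.mp (Nat.le_zero.mp hl)) hne
  | succ n ih =>
    intro s hlen hs hne
    obtain ⟨hsort, hbd, hpre, hsum⟩ := hs
    have hN0 : 0 < s.length := List.length_pos_iff.mpr hne
    have hex : ∃ m, 0 < m ∧ m ≤ s.length ∧ (s.take m).sum = m.choose 2 :=
      ⟨s.length, hN0, le_rfl, by rw [List.take_length]; exact hsum⟩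
    classical
    obtain ⟨k, ⟨hk0, hkN, hksum⟩, hmin⟩ :
        ∃ k, (0 < k ∧ k ≤ s.length ∧ (s.take k).sum = k.choose 2) ∧
          ∀ m, m < k → ¬(0 < m ∧ m ≤ s.length ∧ (s.take m).sum = m.choose 2) :=
      ⟨Nat.find hex, Nat.find_spec hex, fun m hm => Nat.find_min hex hm⟩
    -- strict inequalities below k
    have f2 : ∀ j, 0 < j → j < k → j.choose 2 < (s.take j).sum := by
      intro j hj0 hjk
      have hjN : j < s.length := lt_of_lt_of_le hjk hkN
      have h1 : j.choose 2 ≤ (s.take j).sum := hpre j hj0 hjN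
      rcases lt_or_eq_of_le h1 with h | h
      · exact h
      · exact absurd ⟨hj0, hjN.le, h.symm⟩ (hmin j hjk)
    have f3a : (s.take k).length = k := by
      rw [List.length_take]; omega
    -- entries of the first block are < k
    have hk1 : k - 1 < s.length := by omega
    have e1 : k - 1 + 1 = k := by omega
    have hsucc := List.sum_take_succ s (k - 1) hk1
    rw [e1] at hsucc
    have hpre_k1 : (k - 1).choose 2 ≤ (s.take (k - 1)).sum := by
      rcases Nat.eq_zero_or_pos (k - 1) with h | h
      · simp [h]
      · exact (f2 _ h (by omega)).le
    have hch : k.choose 2 = (k - 1).choose 2 + (k - 1) := by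
      have := choose_two_succ (k - 1); rw [e1] at this; omega
    have hlast : s[k - 1] ≤ k - 1 := by omega
    have f3 : ∀ x ∈ s.take k, x < k := by
      intro x hx
      obtain ⟨i, hi, hix⟩ := List.getElem_of_mem hx
      rw [List.getElem_take] at hix
      have hik : i < k := by have := hi; rwa [f3a] at this
      have hilen : i < s.length := by omega
      have hmono : s[i] ≤ s[k - 1] := by
        have := List.Pairwise.rel_get_of_le hsort
          (a := ⟨i, hilen⟩) (b := ⟨k - 1, hk1⟩) (by simp [Fin.mk_le_mk]; omega)
        simpa using this
      omega
    -- entries of the tail are ≥ k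
    have f4 : ∀ y ∈ s.drop k, k ≤ y := by
      intro y hy
      have hkN' : k < s.length := by
        by_contra h
        have : s.drop k = [] := List.drop_eq_nil_iff.mpr (by omega)
        rw [this] at hy; exact absurd hy (List.not_mem_nil (a := y))
      have hk1N : (k + 1).choose 2 ≤ (s.take (k + 1)).sum := by
        rcases lt_or_eq_of_le (show k + 1 ≤ s.length from hkN') with h | h
        · exact hpre (k + 1) (by omega) h
        · rw [h, List.take_length]
          exact hsum.ge
      have hstk := List.sum_take_succ s k hkN'
      have hcs := choose_two_succ k
      have hgetk : k ≤ s[k] := by omega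
      have hdropcons := List.drop_eq_getElem_cons hkN'
      have hsorted' : (s.drop k).Pairwise (· ≤ ·) :=
        List.Pairwise.sublist (List.drop_sublist k s) hsort
      rw [hdropcons] at hy hsorted'
      rcases List.mem_cons.mp hy with rfl | hy
      · exact hgetk
      · exact le_trans hgetk (List.rel_of_pairwise_cons hsorted' hy)
    have hvlen : ((s.drop k).map (· - k)).length = s.length - k := by simp
    have hvsum' : ((s.drop k).map (· - k)).sum + k * (s.length - k) = (s.drop k).sum := by
      have := sum_map_sub k (s.drop k) f4
      rwa [List.length_drop] at this
    have hsplit : (s.take k).sum + (s.drop k).sum = s.sum := by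
      rw [← List.sum_append, List.take_append_drop]
    have htakeadd : ∀ m, (s.take (k + m)).sum = (s.take k).sum + ((s.drop k).take m).sum := by
      intro m; rw [List.take_add, List.sum_append]
    -- the first block is a strong score sequence
    have hu_strong : IsStrongScoreSeq (s.take k) := by
      refine ⟨⟨List.Pairwise.sublist (List.take_sublist k s) hsort, ?_, ?_, ?_⟩, ?_, ?_⟩
      · intro x hx; rw [f3a]; exact f3 x hx
      · intro j hj0 hjlen
        rw [f3a] at hjlen
        rw [List.take_take, min_eq_left hjlen.le]
        exact (f2 j hj0 hjlen).le
      · rw [f3a, hksum]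
      · exact List.length_pos_iff.mp (by rw [f3a]; exact hk0)
      · intro j hj0 hjlen
        rw [f3a] at hjlen
        rw [List.take_take, min_eq_left hjlen.le]
        exact f2 j hj0 hjlen
    -- the shifted tail is a score sequence
    have hv_score : IsScoreSeq ((s.drop k).map (· - k)) := by
      refine ⟨?_, ?_, ?_, ?_⟩
      · exact List.Pairwise.map _ (fun a b h => Nat.sub_le_sub_right h k)
          (List.Pairwise.sublist (List.drop_sublist k s) hsort)
      · intro x hx
        obtain ⟨y, hy, rfl⟩ := List.mem_map.mp hx
        have hyN : y < s.length := hbd y (List.mem_of_mem_drop hy)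
        have hky : k ≤ y := f4 y hy
        rw [hvlen]; omega
      · intro m hm0 hmlen
        rw [hvlen] at hmlen
        have hdlen : ((s.drop k).take m).length = m := by
          rw [List.length_take, List.length_drop]; omega
        have e : ((((s.drop k).map (· - k))).take m).sum + k * m = ((s.drop k).take m).sum := by
          rw [← List.map_take]
          have := sum_map_sub k ((s.drop k).take m)
            (fun x hx => f4 x (List.mem_of_mem_take hx))
          rwa [hdlen] at this
        have e2 := htakeadd m
        have e4 := hpre (k + m) (by omega) (by omega)
        have e5 := choose_two_add k m
        omega
      · rw [hvlen]
        have e5 := choose_two_add k (s.length - k)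
        have e6 : k + (s.length - k) = s.length := by omega
        rw [e6] at e5
        omega
    -- reconstruction
    have hmapv : ((s.drop k).map (· - k)).map (· + k) = s.drop k := by
      rw [List.map_map]
      conv_rhs => rw [← List.map_id (s.drop k)]
      apply List.map_congr_left
      intro y hy
      have := f4 y hy
      simp [Function.comp]
      omega
    have hrecon : dsum (s.take k) ((s.drop k).map (· - k)) = s := by
      rw [dsum, f3a, hmapv, List.take_append_drop]
    -- dsumAll of strong sequences is [] only for []
    have hne_dsumAll : ∀ ts : List (List ℕ), (∀ t ∈ ts, IsStrongScoreSeq t) →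
        dsumAll ts = [] → ts = [] := by
      intro ts hts hts0
      cases ts with
      | nil => rfl
      | cons a l =>
        rw [dsumAll_cons, dsum] at hts0
        have ha : a ≠ [] := (hts a (by simp)).2.1
        rcases List.append_eq_nil_iff.mp hts0 with ⟨h1, _⟩
        exact absurd h1 ha
    -- any decomposition starts with the first block
    have hfirst : ∀ ts : List (List ℕ), (∀ t ∈ ts, IsStrongScoreSeq t) → dsumAll ts = s →
        ∃ rest, ts = (s.take k) :: rest ∧ (∀ t ∈ rest, IsStrongScoreSeq t) ∧
          dsumAll rest = (s.drop k).map (· - k) := by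
      intro ts hts htsum
      cases ts with
      | nil => exact absurd htsum.symm hne
      | cons t rest =>
        rw [dsumAll_cons, dsum] at htsum
        obtain ⟨⟨_, _, _, htsum2⟩, htne, htstrict⟩ := hts t (by simp)
        have hm0 : 0 < t.length := List.length_pos_iff.mpr htne
        have hmN : t.length ≤ s.length := by rw [← htsum]; simp
        have htake_m : s.take t.length = t := by rw [← htsum, List.take_left]
        have hPm : 0 < t.length ∧ t.length ≤ s.length ∧
            (s.take t.length).sum = t.length.choose 2 :=
          ⟨hm0, hmN, by rw [htake_m]; exact htsum2⟩
        have hkm : k ≤ t.length := by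
          by_contra h
          exact hmin t.length (by omega) hPm
        have hmk : t.length = k := by
          by_contra h
          have hklt : k < t.length := by omega
          have htk : s.take k = t.take k := by
            rw [← htsum, List.take_append_of_le_length (le_of_lt hklt)]
          have h2 := htstrict k hk0 hklt
          rw [← htk] at h2
          omega
        have htu : t = s.take k := by rw [← htake_m, hmk]
        have hdrop : (dsumAll rest).map (· + k) = s.drop k := by
          rw [← htsum, ← hmk, List.drop_left]
        have hrest : dsumAll rest = (s.drop k).map (· - k) := by
          have h3 : ((dsumAll rest).map (· + k)).map (· - k) = (s.drop k).map (· - k) := by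
            rw [hdrop]
          rwa [List.map_map, show ((· - k) ∘ (· + k) : ℕ → ℕ) = id from by
            funext x; simp, List.map_id] at h3
        exact ⟨rest, by rw [htu], fun t' ht' => hts t' (by simp [ht']), hrest⟩
    by_cases hv0 : (s.drop k).map (· - k) = []
    · -- single block: k = s.length
      have hkNe : k = s.length := by
        have := hvlen; rw [hv0] at this; simp at this; omega
      have hus : s.take k = s := by rw [hkNe, List.take_length]
      refine ⟨[s.take k], ⟨?_, ?_⟩, ?_⟩
      · intro t ht; rw [List.mem_singleton] at ht; rw [ht]; exact hu_strong
      · rw [dsumAll_cons, dsumAll, List.foldl_nil, dsum_nil_right, hus]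
      · intro ts ⟨hts1, hts2⟩
        obtain ⟨rest, hrest1, hrest2, hrest3⟩ := hfirst ts hts1 hts2
        rw [hv0] at hrest3
        rw [hrest1, hne_dsumAll rest hrest2 hrest3]
    · -- recurse on the tail
      have hvlen' : ((s.drop k).map (· - k)).length ≤ n := by
        rw [hvlen]; omega
      obtain ⟨ts', ⟨hts'1, hts'2⟩, hts'uniq⟩ := ih _ hvlen' hv_score hv0
      refine ⟨(s.take k) :: ts', ⟨?_, ?_⟩, ?_⟩
      · intro t ht
        rcases List.mem_cons.mp ht with rfl | ht
        · exact hu_strong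
        · exact hts'1 t ht
      · rw [dsumAll_cons, hts'2, hrecon]
      · intro ts ⟨hts1, hts2⟩
        obtain ⟨rest, hrest1, hrest2, hrest3⟩ := hfirst ts hts1 hts2
        rw [hrest1, hts'uniq rest ⟨hrest2, hrest3⟩]

/-- Every nonempty score sequence decomposes uniquely as a direct sum of nonempty
strong score sequences. -/
theorem scoreSeq_unique_strong_decomposition (s : List ℕ) (hs : IsScoreSeq s) (hne : s ≠ []) :
    ∃! ts : List (List ℕ), (∀ t ∈ ts, IsStrongScoreSeq t) ∧ dsumAll ts = s := by
  exact key s.length s le_rfl hs hne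
end

section
/- Let s be a strong score sequence of length n. Then the n multisets μ(s+j) = {s_0 + j, s_1 + j, ..., s_{n-1} + j} over Z/nZ, for j = 0, 1, ..., n-1, are pairwise distinct. -/
lemma mySum_map_add (a : List ℕ) (j : ℕ) :
    (a.map (fun x => x + j)).sum = a.sum + a.length * j := by
  induction a with
  | nil => simp
  | cons x xs ih => simp [ih]; ring

lemma mySum_map_sub (b : List ℕ) (j n : ℕ) (h : ∀ x ∈ b, n ≤ x + j) :
    (b.map (fun x => x + j - n)).sum + b.length * n = b.sum + b.length * j := by
  induction b with
  | nil => simp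
  | cons x xs ih =>
    have hx := h x (by simp)
    have hxs := ih (fun y hy => h y (by simp [hy]))
    have h1 : x + j - n + n = x + j := Nat.sub_add_cancel hx
    simp only [List.map_cons, List.sum_cons, List.length_cons, Nat.succ_mul]
    omega

lemma myChoose_two_add (p q : ℕ) : (p + q).choose 2 = p.choose 2 + q.choose 2 + p * q := by
  induction q with
  | zero => simp
  | succ q ih =>
    have h1 : p + (q + 1) = (p + q) + 1 := rfl
    rw [h1, Nat.choose_succ_succ, Nat.choose_one_right, ih,
      Nat.choose_succ_succ, Nat.choose_one_right, Nat.mul_succ]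
    ring

lemma myAux (s : List ℕ) (hs : IsStrongScoreSeq s) (j : ℕ) (hj0 : 0 < j) (hjn : j < s.length)
    (hperm : (s.map (fun x => (x + j) % s.length)).Perm s) : False := by
  obtain ⟨⟨hsort, hltn, _, hsum⟩, hne, hstr⟩ := hs
  set n := s.length with hn
  set p : ℕ → Bool := fun x => decide (x + j < n) with hp
  set a := s.takeWhile p with ha
  set b := s.dropWhile p with hb
  have hab : a ++ b = s := List.takeWhile_append_dropWhile (p := p) (l := s)
  have hamem : ∀ x ∈ a, x + j < n := by
    intro x hx
    have := List.mem_takeWhile_imp hx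
    simpa [hp] using this
  have hbsorted : b.Pairwise (· ≤ ·) := List.Pairwise.sublist (List.dropWhile_sublist p) hsort
  have hbmem : ∀ x ∈ b, n ≤ x + j := by
    intro x hx
    cases hbb : b with
    | nil => rw [hbb] at hx; simp at hx
    | cons y ys =>
      have hd : s.dropWhile p = y :: ys := hb.symm.trans hbb
      have h0 := List.head?_dropWhile_not p s
      rw [hd] at h0
      simp only [List.head?_cons] at h0
      have hyf : ¬ (y + j < n) := by simpa [hp] using h0
      rw [hbb] at hx hbsorted
      rcases List.mem_cons.mp hx with rfl | hxy
      · omega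
      · have := List.rel_of_pairwise_cons hbsorted hxy
        omega
  have hsmem : ∀ x ∈ b, x < n := fun x hx => hltn x (by rw [← hab]; exact List.mem_append_right a hx)
  -- split the mapped list
  have hsplit : s.map (fun x => (x + j) % n) =
      a.map (fun x => x + j) ++ b.map (fun x => x + j - n) := by
    conv_lhs => rw [← hab]
    rw [List.map_append]
    congr 1
    · apply List.map_congr_left
      intro x hx
      exact Nat.mod_eq_of_lt (hamem x hx)
    · apply List.map_congr_left
      intro x hx
      have h1 := hbmem x hx
      have h2 := hsmem x hx
      rw [Nat.mod_eq_sub_mod h1]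
      exact Nat.mod_eq_of_lt (by omega)
  set t : List ℕ := b.map (fun x => x + j - n) ++ a.map (fun x => x + j) with ht
  have htperm : t.Perm s := by
    refine (List.perm_append_comm).trans ?_
    rw [← hsplit]
    exact hperm
  have htsorted : t.Pairwise (· ≤ ·) := by
    rw [ht, List.pairwise_append]
    refine ⟨?_, ?_, ?_⟩
    · rw [List.pairwise_map]
      exact hbsorted.imp (fun h => by omega)
    · rw [List.pairwise_map]
      exact (List.Pairwise.sublist (List.takeWhile_sublist p) hsort).imp (fun h => by omega)
    · intro x hx y hy
      simp only [List.mem_map] at hx hy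
      obtain ⟨xb, hxb, rfl⟩ := hx
      obtain ⟨ya, -, rfl⟩ := hy
      have := hsmem xb hxb
      omega
  have heq : t = s := List.Perm.eq_of_pairwise' htsorted hsort htperm
  have hlen : a.length + b.length = n := by rw [hn, ← hab]; simp
  have e1 : (b.map (fun x => x + j - n)).sum + b.length * n = b.sum + b.length * j :=
    mySum_map_sub b j n hbmem
  have e2 : (b.map (fun x => x + j - n)).sum + a.length * j = b.sum := by
    have h9 := congrArg List.sum heq
    rw [ht, List.sum_append, mySum_map_add] at h9
    have hs2 : s.sum = a.sum + b.sum := by rw [← hab, List.sum_append]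
    omega
  have hlbj : b.length = j := by
    have h4 : b.length * n = a.length * j + b.length * j := by omega
    have h5 : b.length * n = j * n := by
      rw [h4, ← Nat.add_mul, Nat.add_comm a.length b.length, Nat.add_comm b.length a.length,
        hlen, Nat.mul_comm]
    exact Nat.eq_of_mul_eq_mul_right (by omega) h5
  have hmlen : (b.map (fun x => x + j - n)).length = j := by simp [hlbj]
  have hpre : s.take j = b.map (fun x => x + j - n) := by
    have h6 := List.take_left (l₁ := b.map (fun x => x + j - n)) (l₂ := a.map (fun x => x + j))
    rw [← ht, heq, hmlen] at h6
    exact h6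
  have hprea : s.take a.length = a := by
    have h7 := List.take_left (l₁ := a) (l₂ := b)
    rw [hab] at h7
    exact h7
  have hstr1 : j.choose 2 < (b.map (fun x => x + j - n)).sum := by
    have := hstr j hj0 hjn
    rwa [hpre] at this
  have hla0 : 0 < a.length := by omega
  have hlan : a.length < n := by omega
  have hstr2 : a.length.choose 2 < a.sum := by
    have := hstr a.length hla0 hlan
    rwa [hprea] at this
  have hid : n.choose 2 = a.length.choose 2 + j.choose 2 + a.length * j := by
    rw [show n = a.length + j by omega]
    exact myChoose_two_add a.length j
  have htot : a.sum + b.sum = n.choose 2 := by rw [← hab] at hsum; simpa using hsum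
  omega

lemma myAux2 (s : List ℕ) (hs : IsStrongScoreSeq s)
    (j₁ j₂ : ℕ) (h₂ : j₂ < s.length) (hlt : j₁ < j₂)
    (h : Multiset.map (fun x => ((x + j₁ : ℕ) : ZMod s.length)) (↑s : Multiset ℕ) =
         Multiset.map (fun x => ((x + j₂ : ℕ) : ZMod s.length)) (↑s : Multiset ℕ)) : False := by
  have hn : 0 < s.length := List.length_pos_iff.mpr hs.2.1
  set n := s.length with hndef
  haveI : NeZero n := ⟨hn.ne'⟩
  set j := j₂ - j₁ with hj
  have hj2 : j₂ = j₁ + j := by omega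
  have hj0 : 0 < j := by omega
  have hjn : j < n := by omega
  have h' := congrArg (Multiset.map (fun z : ZMod n => z - ((j₁ : ℕ) : ZMod n))) h
  rw [Multiset.map_map, Multiset.map_map] at h'
  have e1 : ((fun z : ZMod n => z - ((j₁ : ℕ) : ZMod n)) ∘ fun x : ℕ => ((x + j₁ : ℕ) : ZMod n))
      = fun x : ℕ => ((x : ℕ) : ZMod n) := by
    funext x; simp only [Function.comp]; push_cast; ring
  have e2 : ((fun z : ZMod n => z - ((j₁ : ℕ) : ZMod n)) ∘ fun x : ℕ => ((x + j₂ : ℕ) : ZMod n))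
      = fun x : ℕ => ((x + j : ℕ) : ZMod n) := by
    funext x; simp only [Function.comp, hj2]; push_cast; ring
  rw [e1, e2] at h'
  -- now relate to mod
  set f : ℕ → ℕ := fun x => (x + j) % n with hf
  have h'' : Multiset.map (fun x : ℕ => ((x : ℕ) : ZMod n)) (↑(s.map f) : Multiset ℕ)
      = Multiset.map (fun x : ℕ => ((x : ℕ) : ZMod n)) (↑s : Multiset ℕ) := by
    rw [← Multiset.map_coe, Multiset.map_map]
    rw [h']
    apply Multiset.map_congr rfl
    intro x _
    simp only [Function.comp, hf]
    rw [ZMod.natCast_mod]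
  have h3 := congrArg (Multiset.map (fun z : ZMod n => z.val)) h''
  rw [Multiset.map_map, Multiset.map_map] at h3
  have hid1 : Multiset.map ((fun z : ZMod n => z.val) ∘ fun x : ℕ => ((x : ℕ) : ZMod n))
      (↑(s.map f) : Multiset ℕ) = ↑(s.map f) := by
    rw [Multiset.map_coe]
    congr 1
    have : ∀ x ∈ s.map f, ((fun z : ZMod n => z.val) ∘ fun x : ℕ => ((x : ℕ) : ZMod n)) x = id x := by
      intro x hx
      simp only [Function.comp, id]
      apply ZMod.val_cast_of_lt
      simp only [List.mem_map] at hx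
      obtain ⟨y, -, rfl⟩ := hx
      exact Nat.mod_lt _ hn
    rw [List.map_congr_left this, List.map_id]
  have hid2 : Multiset.map ((fun z : ZMod n => z.val) ∘ fun x : ℕ => ((x : ℕ) : ZMod n))
      (↑s : Multiset ℕ) = ↑s := by
    rw [Multiset.map_coe]
    congr 1
    have : ∀ x ∈ s, ((fun z : ZMod n => z.val) ∘ fun x : ℕ => ((x : ℕ) : ZMod n)) x = id x := by
      intro x hx
      simpa using ZMod.val_cast_of_lt (hs.1.2.1 x hx)
    rw [List.map_congr_left this, List.map_id]
  rw [hid1, hid2] at h3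
  exact myAux s hs j hj0 hjn (Multiset.coe_eq_coe.mp h3)

/-- For a strong score sequence `s` of length `n`, the `n` multisets of residues of
shifted entries are pairwise distinct. -/
theorem strong_shift_multisets_distinct (s : List ℕ) (hs : IsStrongScoreSeq s)
    (j₁ j₂ : ℕ) (h₁ : j₁ < s.length) (h₂ : j₂ < s.length)
    (h : Multiset.map (fun x => ((x + j₁ : ℕ) : ZMod s.length)) (↑s : Multiset ℕ) =
         Multiset.map (fun x => ((x + j₂ : ℕ) : ZMod s.length)) (↑s : Multiset ℕ)) :
    j₁ = j₂ := by
  rcases lt_trichotomy j₁ j₂ with hlt | heq | hgt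
  · exact absurd h (fun h => myAux2 s hs j₁ j₂ h₂ hlt h)
  · exact heq
  · exact absurd h.symm (fun h => myAux2 s hs j₂ j₁ h₁ hgt h)
end

section
/- For every multiset M of size n over Z/nZ whose sum is congruent to binomial(n,2) modulo n, there exists a score sequence s of length n and an integer j with 0 ≤ j ≤ n-1 such that the multiset {s_0 + j, ..., s_{n-1} + j} of residues modulo n equals M. -/
private lemma egz_aux_sum_range_id_int (n : ℕ) : (∑ i ∈ Finset.range n, (i : ℤ)) = (n.choose 2 : ℕ) := by
  have h := Finset.sum_range_id_mul_two n
  have h2 := Nat.choose_two_right n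
  have : (∑ i ∈ Finset.range n, i) = n.choose 2 := by omega
  push_cast [← this]
  rfl

private lemma egz_aux_cycle_main (n : ℕ) (hn : 0 < n) (A : ℕ → ℤ) (hmono : Monotone A)
    (hper : ∀ i, A (i + n) = A i + (n : ℤ))
    (q : ℤ) (hS : ∑ i ∈ Finset.range n, A i = n * q + (n.choose 2 : ℕ)) :
    ∃ k : ℕ, k < n ∧
      (∀ i, i < n → (k : ℤ) + q ≤ A (k + i)) ∧
      (∀ i, i < n → A (k + i) + 1 ≤ (k : ℤ) + q + n) ∧
      (∀ m, m ≤ n → (m.choose 2 : ℤ) + m * ((k : ℤ) + q) ≤ ∑ i ∈ Finset.range m, A (k + i)) ∧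
      (∑ i ∈ Finset.range n, A (k + i) = (n.choose 2 : ℤ) + n * ((k : ℤ) + q)) := by
  set B : ℕ → ℤ := fun i => A i - i - q with hB
  set T : ℕ → ℤ := fun m => ∑ i ∈ Finset.range m, B i with hT
  have hBper : ∀ i, B (i + n) = B i := by
    intro i; simp only [hB, hper i]; push_cast; ring
  have hTn : T n = 0 := by
    simp only [hT, hB, Finset.sum_sub_distrib, hS, egz_aux_sum_range_id_int n, Finset.sum_const,
      Finset.card_range, nsmul_eq_mul]
    ring
  have hTper : ∀ m, T (m + n) = T m := by
    intro m
    induction m with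
    | zero => simpa [hT] using hTn
    | succ m ih =>
      have e1 : T (m + 1 + n) = T (m + n) + B (m + n) := by
        simp only [hT]
        rw [show m + 1 + n = (m + n) + 1 by ring, Finset.sum_range_succ]
      have e2 : T (m + 1) = T m + B m := by simp only [hT, Finset.sum_range_succ]
      rw [e1, e2, ih, hBper]
  have hTmod : ∀ m, T m = T (m % n) := by
    intro m
    induction m using Nat.strong_induction_on with
    | _ m ih =>
      rcases lt_or_ge m n with h | h
      · rw [Nat.mod_eq_of_lt h]
      · have h2 : m % n = (m - n) % n := by
          conv_lhs => rw [show m = (m - n) + n by omega]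
          rw [Nat.add_mod_right]
        calc T m = T ((m - n) + n) := by rw [Nat.sub_add_cancel h]
          _ = T (m - n) := hTper _
          _ = T ((m - n) % n) := ih _ (by omega)
          _ = T (m % n) := by rw [h2]
  -- choose k minimizing T on range n
  obtain ⟨k, hk, hkmin⟩ := Finset.exists_min_image (Finset.range n) T ⟨0, by simp [hn]⟩
  rw [Finset.mem_range] at hk
  have hmin : ∀ m, T k ≤ T m := by
    intro m
    rw [hTmod m]
    exact hkmin _ (Finset.mem_range.mpr (Nat.mod_lt _ hn))
  have hTsum : ∀ m, ∑ i ∈ Finset.range m, A (k + i)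
      = T (k + m) - T k + (m.choose 2 : ℤ) + m * ((k : ℤ) + q) := by
    intro m
    have : ∀ i ∈ Finset.range m, A (k + i) = B (k + i) + ((k : ℤ) + i) + q := by
      intro i _; simp only [hB]; push_cast; ring
    rw [Finset.sum_congr rfl this]
    have hsplit : T (k + m) - T k = ∑ i ∈ Finset.range m, B (k + i) := by
      simp only [hT]
      rw [show k + m = k + m from rfl]
      rw [Finset.sum_range_add]  -- maybe wrong name
      ring
    rw [Finset.sum_add_distrib, Finset.sum_add_distrib, ← hsplit, Finset.sum_add_distrib,
      egz_aux_sum_range_id_int]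
    simp only [Finset.sum_const, Finset.card_range, nsmul_eq_mul]
    ring
  refine ⟨k, hk, ?_, ?_, ?_, ?_⟩
  · intro i hi
    have h1 : A k ≤ A (k + i) := hmono (Nat.le_add_right k i)
    have h2 : (0:ℤ) ≤ B k := by
      have := hmin (k + 1)
      have e : T (k + 1) = T k + B k := by simp only [hT, Finset.sum_range_succ]
      omega
    simp only [hB] at h2
    omega
  · intro i hi
    have h1 : A (k + i) ≤ A (k + (n - 1)) := hmono (by omega)
    have h2 : B (k + (n - 1)) ≤ 0 := by
      have e : T (k + (n-1)) + B (k + (n-1)) = T (k + (n-1) + 1) := by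
        simp only [hT, Finset.sum_range_succ]
      have e2 : k + (n - 1) + 1 = k + n := by omega
      rw [e2] at e
      have e3 : T (k + n) = T k := by rw [hTper]
      have := hmin (k + (n - 1))
      omega
    simp only [hB] at h2
    push_cast at h2 ⊢
    have : ((n:ℤ) - 1) = ((n - 1 : ℕ) : ℤ) := by omega
    omega
  · intro m hm
    have := hTsum m
    have h2 := hmin (k + m)
    omega
  · have := hTsum n
    have e3 : T (k + n) = T k := hTper k
    omega

/-- Every multiset in `EGZ_n` arises as the multiset of residues of a shifted score
sequence of length `n`. -/
theorem egz_is_shifted_scoreSeq (n : ℕ) (hn : 1 ≤ n) (M : Multiset (ZMod n))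
    (hcard : Multiset.card M = n) (hsum : M.sum = (n.choose 2 : ZMod n)) :
    ∃ (s : List ℕ) (j : ℕ), IsScoreSeq s ∧ s.length = n ∧ j ≤ n - 1 ∧
      Multiset.map (fun x => ((x + j : ℕ) : ZMod n)) (↑s : Multiset ℕ) = M := by
  haveI : NeZero n := ⟨by omega⟩
  classical
  set l : List ℕ := Multiset.sort (M.map ZMod.val) (· ≤ ·) with hl
  have hlsort : l.Pairwise (· ≤ ·) := Multiset.pairwise_sort _ _
  have hlcoe : (↑l : Multiset ℕ) = M.map ZMod.val := Multiset.sort_eq _ _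
  have hllen : l.length = n := by
    rw [hl, Multiset.length_sort, Multiset.card_map, hcard]
  have hlt : ∀ x ∈ l, x < n := by
    intro x hx
    have hx' : x ∈ M.map ZMod.val := by rw [← hlcoe]; exact_mod_cast hx
    obtain ⟨y, _, rfl⟩ := Multiset.mem_map.mp hx'
    exact ZMod.val_lt y
  have hM : Multiset.map (Nat.cast : ℕ → ZMod n) ↑l = M := by
    rw [hlcoe, Multiset.map_map]
    rw [show ((Nat.cast : ℕ → ZMod n) ∘ ZMod.val) = id from funext fun x => ZMod.natCast_rightInverse x]
    exact Multiset.map_id M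
  set A : ℕ → ℤ := fun i => (l.getD (i % n) 0 : ℤ) + n * ((i / n : ℕ) : ℤ) with hA
  have hgetlt : ∀ r, r < n → l.getD r 0 < n := by
    intro r hr
    rw [List.getD_eq_getElem l 0 (by omega)]
    exact hlt _ (List.getElem_mem _)
  have hstep : ∀ r, r + 1 < n → l.getD r 0 ≤ l.getD (r + 1) 0 := by
    intro r hr
    rw [List.getD_eq_getElem l 0 (by omega), List.getD_eq_getElem l 0 (by omega)]
    have := hlsort.rel_get_of_lt (a := ⟨r, by omega⟩) (b := ⟨r + 1, by omega⟩)
      (by simp [Fin.lt_def])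
    simpa [List.get_eq_getElem] using this
  have hmono : Monotone A := by
    apply monotone_nat_of_le_succ
    intro i
    have hrlt : i % n < n := Nat.mod_lt _ (by omega)
    have hidm : i = i % n + (i / n) * n := by rw [Nat.mod_add_div']
    rcases Nat.lt_or_ge (i % n + 1) n with h | h
    · have e1 : (i + 1) % n = i % n + 1 := by
        conv_lhs => rw [show i + 1 = (i % n + 1) + (i / n) * n by omega]
        rw [Nat.add_mul_mod_self_right, Nat.mod_eq_of_lt h]
      have e2 : (i + 1) / n = i / n := by
        conv_lhs => rw [show i + 1 = (i % n + 1) + (i / n) * n by omega]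
        rw [Nat.add_mul_div_right _ _ (by omega : 0 < n), Nat.div_eq_of_lt h, Nat.zero_add]
      simp only [hA, e1, e2]
      have := hstep (i % n) h
      have : ((l.getD (i % n) 0 : ℕ) : ℤ) ≤ ((l.getD (i % n + 1) 0 : ℕ) : ℤ) := by exact_mod_cast this
      omega
    · have hr : i % n = n - 1 := by omega
      have e0 : i + 1 = (i / n + 1) * n := by
        have er : (i / n + 1) * n = i / n * n + n := by ring
        omega
      have e1 : (i + 1) % n = 0 := by rw [e0, Nat.mul_mod_left]
      have e2 : (i + 1) / n = i / n + 1 := by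
        rw [e0]
        exact Nat.mul_div_cancel _ (by omega)
      simp only [hA, e1, e2]
      have hb' : ((l.getD (i % n) 0 : ℕ) : ℤ) < n := by exact_mod_cast hgetlt _ hrlt
      have hnn : (0 : ℤ) ≤ ((l.getD 0 0 : ℕ) : ℤ) := by positivity
      have e3 : ((i / n + 1 : ℕ) : ℤ) = ((i / n : ℕ) : ℤ) + 1 := by push_cast; ring
      rw [e3]
      have e4 : (n : ℤ) * (((i / n : ℕ) : ℤ) + 1) = (n : ℤ) * ((i / n : ℕ) : ℤ) + n := by ring
      rw [e4]
      linarith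
  have hper : ∀ i, A (i + n) = A i + (n : ℤ) := by
    intro i
    simp only [hA, Nat.add_mod_right, Nat.add_div_right _ (by omega : 0 < n)]
    push_cast
    ring
  have hofn : l = List.ofFn (fun i : Fin n => l.getD i.val 0) := by
    apply List.ext_getElem
    · simp [hllen]
    · intro i h1 h2
      rw [List.getElem_ofFn]
      exact (List.getD_eq_getElem l 0 h1).symm
  have hsum_l : ∑ i ∈ Finset.range n, A i = (l.sum : ℤ) := by
    have e1 : ∀ i ∈ Finset.range n, A i = ((l.getD i 0 : ℕ) : ℤ) := by
      intro i hi
      rw [Finset.mem_range] at hi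
      simp only [hA, Nat.mod_eq_of_lt hi, Nat.div_eq_of_lt hi, Nat.cast_zero, mul_zero, add_zero]
    rw [Finset.sum_congr rfl e1]
    have e2 : l.sum = ∑ i ∈ Finset.range n, l.getD i 0 := by
      conv_lhs => rw [hofn]
      rw [List.sum_ofFn]
      exact Fin.sum_univ_eq_sum_range (fun i => l.getD i 0) n
    rw [e2]
    push_cast
    rfl
  have hmodsum : ((l.sum : ℕ) : ZMod n) = ((n.choose 2 : ℕ) : ZMod n) := by
    calc ((l.sum : ℕ) : ZMod n) = ((↑l : Multiset ℕ).sum : ZMod n) := by rw [Multiset.sum_coe]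
      _ = (Multiset.map (Nat.cast : ℕ → ZMod n) ↑l).sum := Nat.cast_multiset_sum _
      _ = M.sum := by rw [hM]
      _ = _ := hsum
  have hdvd : (n : ℤ) ∣ (l.sum : ℤ) - (n.choose 2 : ℕ) := by
    have h := (ZMod.natCast_eq_natCast_iff _ _ _).mp hmodsum
    exact dvd_sub_comm.mp (Nat.ModEq.dvd h)
  set q : ℤ := ((l.sum : ℤ) - (n.choose 2 : ℕ)) / n with hq
  have hqmul : (n : ℤ) * q = (l.sum : ℤ) - (n.choose 2 : ℕ) := Int.mul_ediv_cancel' hdvd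
  have hS : ∑ i ∈ Finset.range n, A i = n * q + (n.choose 2 : ℕ) := by
    rw [hsum_l]; omega
  obtain ⟨k, hk, h1, h2, h3, h4⟩ := egz_aux_cycle_main n (by omega) A hmono hper q hS
  set f : Fin n → ℕ := fun i => (A (k + i.val) - ((k : ℤ) + q)).toNat with hf
  set c : List ℕ := List.ofFn f with hc
  have hclen : c.length = n := List.length_ofFn
  have hfz : ∀ i : Fin n, ((f i : ℕ) : ℤ) = A (k + i.val) - ((k : ℤ) + q) := by
    intro i
    have := h1 i.val i.isLt
    exact Int.toNat_of_nonneg (by omega)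
  set jz : ℤ := ((k : ℤ) + q) % n with hjz
  have hjznn : (0 : ℤ) ≤ jz := Int.emod_nonneg _ (by exact_mod_cast (by omega : n ≠ 0))
  have hjzlt : jz < n := Int.emod_lt_of_pos _ (by exact_mod_cast hn)
  set j : ℕ := jz.toNat with hj
  have hjz' : ((j : ℕ) : ℤ) = jz := Int.toNat_of_nonneg hjznn
  -- partial sums of c
  have hsum_take : ∀ m, m ≤ n → (((c.take m).sum : ℕ) : ℤ)
      = ∑ i ∈ Finset.range m, (A (k + i) - ((k : ℤ) + q)) := by
    intro m hm
    have htake : c.take m = List.ofFn (fun i : Fin m => f (Fin.castLE hm i)) := by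
      apply List.ext_getElem
      · simp only [List.length_take, List.length_ofFn, hclen]
        omega
      · intro i hi1 hi2
        simp [hc, List.getElem_take, List.getElem_ofFn, Fin.castLE]
    rw [htake, List.sum_ofFn]
    push_cast
    have e5 : ∀ x : Fin m, ((f (Fin.castLE hm x) : ℕ) : ℤ) = A (k + x.val) - ((k : ℤ) + q) :=
      fun x => hfz _
    rw [Finset.sum_congr rfl (fun x _ => e5 x)]
    exact Fin.sum_univ_eq_sum_range (fun i => A (k + i) - ((k : ℤ) + q)) m
  refine ⟨c, j, ⟨?_, ?_, ?_, ?_⟩, hclen, ?_, ?_⟩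
  · -- sorted
    rw [hc]
    refine List.pairwise_ofFn.mpr ?_
    intro a b hab
    have hm' : A (k + a.val) ≤ A (k + b.val) := hmono (by omega : k + a.val ≤ k + b.val)
    have ha := hfz a
    have hb := hfz b
    omega
  · -- entries below length
    intro x hx
    rw [hclen]
    rw [hc] at hx
    obtain ⟨i, rfl⟩ := Set.mem_range.mp (List.mem_ofFn.mp hx)
    have h2' := h2 i.val i.isLt
    have := hfz i
    omega
  · -- prefix sums
    intro m hm0 hmlen
    rw [hclen] at hmlen
    have hst := hsum_take m (le_of_lt hmlen)
    have h3' := h3 m (le_of_lt hmlen)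
    have hsplit : ∑ i ∈ Finset.range m, (A (k + i) - ((k : ℤ) + q))
        = (∑ i ∈ Finset.range m, A (k + i)) - m * ((k : ℤ) + q) := by
      rw [Finset.sum_sub_distrib, Finset.sum_const, Finset.card_range, nsmul_eq_mul]
    have hfin : ((m.choose 2 : ℕ) : ℤ) ≤ (((c.take m).sum : ℕ) : ℤ) := by
      rw [hst, hsplit]; linarith
    exact_mod_cast hfin
  · -- total sum
    rw [hclen]
    have hst := hsum_take n le_rfl
    have hct : c.take n = c := List.take_of_length_le (by omega)
    rw [hct] at hst
    have hsplit : ∑ i ∈ Finset.range n, (A (k + i) - ((k : ℤ) + q))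
        = (∑ i ∈ Finset.range n, A (k + i)) - n * ((k : ℤ) + q) := by
      rw [Finset.sum_sub_distrib, Finset.sum_const, Finset.card_range, nsmul_eq_mul]
    have hfin : ((c.sum : ℕ) : ℤ) = ((n.choose 2 : ℕ) : ℤ) := by
      rw [hst, hsplit, h4]; ring
    exact_mod_cast hfin
  · -- j ≤ n - 1
    omega
  · -- multiset equality
    have key : ∀ i : Fin n, ((f i + j : ℕ) : ZMod n)
        = ((l.getD ((k + i.val) % n) 0 : ℕ) : ZMod n) := by
      intro i
      have e1 : ((f i + j : ℕ) : ℤ) = A (k + i.val) - ((k : ℤ) + q) + jz := by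
        push_cast
        rw [hfz i, hjz']
      have e2 : (((f i + j : ℕ) : ℤ) : ZMod n) = ((f i + j : ℕ) : ZMod n) := Int.cast_natCast _
      have e3 : (((l.getD ((k + i.val) % n) 0 : ℕ) : ℤ) : ZMod n)
          = ((l.getD ((k + i.val) % n) 0 : ℕ) : ZMod n) := Int.cast_natCast _
      rw [← e2, ← e3, e1]
      apply (ZMod.intCast_eq_intCast_iff _ _ _).mpr
      rw [Int.modEq_iff_dvd]
      have hAexp : A (k + i.val)
          = ((l.getD ((k + i.val) % n) 0 : ℕ) : ℤ) + n * (((k + i.val) / n : ℕ) : ℤ) := rfl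
      have hjzexp : jz = ((k : ℤ) + q) - n * (((k : ℤ) + q) / n) := by rw [hjz, Int.emod_def]
      refine ⟨(((k : ℤ) + q) / n) - (((k + i.val) / n : ℕ) : ℤ), ?_⟩
      rw [hAexp, hjzexp]
      ring
    set kf : Fin n := ⟨k, hk⟩ with hkf
    set e : Equiv.Perm (Fin n) := Equiv.addLeft kf with he
    set F : Multiset (Fin n) := ↑(List.finRange n) with hF
    set g2 : Fin n → ZMod n := fun i => ((l.getD i.val 0 : ℕ) : ZMod n) with hg2
    have hperm : Multiset.map (⇑e) F = F := by
      apply Multiset.eq_of_le_of_card_le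
      · rw [Multiset.le_iff_subset ((Multiset.coe_nodup.mpr (List.nodup_finRange n)).map
          e.injective)]
        intro x hx
        rw [hF, Multiset.mem_coe]
        exact List.mem_finRange _
      · simp [hF, Multiset.card_map]
    have hMr : M = Multiset.map g2 F := by
      rw [← hM]
      conv_lhs => rw [hofn]
      rw [List.ofFn_eq_map, ← Multiset.map_coe, Multiset.map_map]
      rfl
    have hcF : (↑c : Multiset ℕ) = Multiset.map f F := by
      rw [hc, List.ofFn_eq_map, hF, Multiset.map_coe]
    rw [hMr, hcF, Multiset.map_map]
    conv_rhs => rw [← hperm, Multiset.map_map]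
    apply Multiset.map_congr rfl
    intro i _
    have hval : (e i).val = (k + i.val) % n := by
      simp only [he, Equiv.coe_addLeft, hkf, Fin.val_add]
    simp only [Function.comp_apply, hg2, hval]
    exact key i
end

section
/- Let L_n be the set of pairs (s, i) where s is a score sequence of length n with strong-summand decomposition s = t_1 ⊕ ... ⊕ t_k and i is a position in the last strong summand, i.e., n - |t_k| ≤ i ≤ n-1. Then the map f(s, i) = μ(s - i), sending such a pair to the multiset of residues {s_0 - i, ..., s_{n-1} - i} modulo n, is a bijection from L_n onto EGZ_n, the set of multisets of size n over Z/nZ with sum binomial(n,2) mod n. Moreover, if M = f(s,i), then the multiplicity of 0 in M equals the number of indices j with s_j = i. -/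
/-- The set of pointed score sequences of length `n` whose distinguished position
lies in the last strong summand. -/
def Lset (n : ℕ) : Set (List ℕ × ℕ) :=
  {p | IsScoreSeq p.1 ∧ p.1.length = n ∧
    ∃ u t, p.1 = dsum u t ∧ IsScoreSeq u ∧ IsStrongScoreSeq t ∧
      n - t.length ≤ p.2 ∧ p.2 ≤ n - 1}

/-- `EGZ_n`: multisets of size `n` over `ZMod n` with sum `binom n 2`. -/
def EGZset (n : ℕ) : Set (Multiset (ZMod n)) :=
  {M | Multiset.card M = n ∧ M.sum = (n.choose 2 : ZMod n)}


namespace EGZaux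
open List


/-- `C k = k choose 2` as an integer. -/
def C (k : ℕ) : ℤ := (k.choose 2 : ℤ)

lemma C_zero : C 0 = 0 := rfl
lemma C_one : C 1 = 0 := rfl

lemma C_succ (k : ℕ) : C (k+1) = C k + k := by
  unfold C
  have h : (k+1).choose 2 = k.choose 1 + k.choose 2 := Nat.choose_succ_succ k 1
  rw [h, Nat.choose_one_right]; push_cast; ring

lemma C_add (m k : ℕ) : C (m + k) = C m + C k + m * k := by
  induction k with
  | zero => simp [C]
  | succ k ih =>
      have : m + (k+1) = (m+k) + 1 := by ring
      rw [this, C_succ, ih, C_succ]; push_cast; ring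

lemma two_C (k : ℕ) : 2 * C k = k * ((k:ℤ) - 1) := by
  induction k with
  | zero => simp [C]
  | succ k ih => rw [C_succ]; push_cast; push_cast at ih; nlinarith [ih]

lemma C_nonneg (k : ℕ) : 0 ≤ C k := Int.ofNat_nonneg _

lemma sum_map_add (l : List ℤ) (c : ℤ) :
    (l.map (fun x => x + c)).sum = l.sum + l.length * c := by
  induction l with
  | nil => simp
  | cons a t ih => simp [ih]; ring

lemma sum_toNat_cast (l : List ℤ) (h : ∀ x ∈ l, 0 ≤ x) :
    (((l.map Int.toNat).sum : ℕ) : ℤ) = l.sum := by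
  induction l with
  | nil => simp
  | cons a t ih =>
      simp only [List.map_cons, List.sum_cons, Nat.cast_add]
      rw [Int.toNat_of_nonneg (h a (by simp)), ih (fun x hx => h x (by simp [hx]))]

lemma sum_take_drop (a : List ℤ) (r k : ℕ) :
    ((a.drop r).take k).sum = (a.take (r + k)).sum - (a.take r).sum := by
  rw [List.take_add, List.sum_append]; ring

/-- prefix-sum "potential" function. -/
def Qf (a : List ℤ) (q : ℤ) (k : ℕ) : ℤ := (a.take k).sum - C k - q * k

lemma Qf_zero (a : List ℤ) (q : ℤ) : Qf a q 0 = 0 := by simp [Qf, C_zero]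

lemma Qf_succ (a : List ℤ) (q : ℤ) (k : ℕ) (hk : k < a.length) :
    Qf a q (k+1) = Qf a q k + a[k] - k - q := by
  unfold Qf
  rw [List.sum_take_succ _ _ hk, C_succ]
  push_cast; ring

/-- the rotated-and-shifted sequence. -/
def rot (a : List ℤ) (r : ℕ) (i : ℤ) (n : ℕ) : List ℤ :=
  (a.drop r).map (fun x => x + (i - n)) ++ (a.take r).map (fun x => x + i)

lemma rot_length (a : List ℤ) (r : ℕ) (i : ℤ) (n : ℕ) (hl : a.length = n) (hr : r ≤ n) :
    (rot a r i n).length = n := by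
  simp [rot, hl]; omega

lemma rot_take_sum_le {a : List ℤ} {q i : ℤ} {r d n k : ℕ} (hl : a.length = n)
    (hrd : r + d = n) (hi : i = (d : ℤ) - q) (hk : k ≤ d) :
    ((rot a r i n).take k).sum = Qf a q (r + k) - Qf a q r + C k := by
  have hd : (a.drop r).length = d := by rw [List.length_drop]; omega
  have h1 : (rot a r i n).take k = ((a.drop r).take k).map (fun x => x + (i - n)) := by
    rw [rot, List.take_append_of_le_length
      (by simp only [List.length_map, List.length_drop]; omega), List.map_take]
  have hlk : ((a.drop r).take k).length = k := by
    rw [List.length_take, hd]; omega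
  rw [h1, sum_map_add, hlk, sum_take_drop]
  have hC : C (r + k) = C r + C k + r * k := C_add r k
  unfold Qf
  rw [hC]
  push_cast
  subst hi
  have : (n : ℤ) = r + d := by exact_mod_cast hrd.symm
  rw [this]; ring

lemma rot_take_sum_ge {a : List ℤ} {q i : ℤ} {r d n k : ℕ} (hl : a.length = n)
    (hrd : r + d = n) (hi : i = (d : ℤ) - q) (hQn : Qf a q n = 0)
    (hk : d ≤ k) (hk2 : k ≤ n) :
    ((rot a r i n).take k).sum = Qf a q (k - d) - Qf a q r + C k := by
  have hd : ((a.drop r).map (fun x => x + (i - n))).length = d := by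
    simp [List.length_drop]; omega
  have h1 : (rot a r i n).take k
      = ((a.drop r).map (fun x => x + (i - n))) ++ (((a.take r).map (fun x => x + i)).take (k - d)) := by
    rw [rot, List.take_append, List.take_of_length_le (by omega), hd]
  have h2 : ((a.take r).map (fun x => x + i)).take (k - d) = ((a.take (k - d)).map (fun x => x + i)) := by
    rw [← List.map_take, List.take_take, min_eq_left (by omega)]
  rw [h1, h2, List.sum_append, sum_map_add, sum_map_add]
  have hlr : (a.drop r).length = d := by rw [List.length_drop]; omega
  have hlt : (a.take (k - d)).length = k - d := by rw [List.length_take]; omega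
  have hdropsum : (a.drop r).sum = a.sum - (a.take r).sum := by
    have := List.sum_take_add_sum_drop a r
    linarith
  have hsum : a.sum = C n + q * n := by
    have h := hQn
    unfold Qf at h
    rw [List.take_of_length_le (by omega)] at h
    linarith
  have hlt : (a.take (k - d)).length = k - d := by rw [List.length_take]; omega
  rw [hlr, hlt, hdropsum, hsum]
  unfold Qf
  have hCn : C n = C r + C d + (r : ℤ) * (d : ℤ) := by rw [← hrd, C_add]
  have hCk : C k = C (k - d) + C d + ((k - d : ℕ) : ℤ) * (d : ℤ) := by
    conv_lhs => rw [show k = (k - d) + d by omega]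
    rw [C_add]
  have hc1 : ((k - d : ℕ) : ℤ) = (k : ℤ) - d := by
    have : d ≤ k := hk
    push_cast [this]; ring
  have hc2 : ((n : ℕ) : ℤ) = (r : ℤ) + d := by exact_mod_cast hrd.symm
  rw [hCk, hc1, hc2, hi]
  linear_combination hCn



lemma sorted_getElem_le {α : Type*} [LinearOrder α] {a : List α} (hs : a.Pairwise (· ≤ ·)) {i j : ℕ} (hij : i ≤ j)
    (hj : j < a.length) : a[i]'(by omega) ≤ a[j] := by
  rcases eq_or_lt_of_le hij with rfl | h
  · exact le_refl _
  · have := hs.rel_get_of_lt (a := ⟨i, by omega⟩) (b := ⟨j, hj⟩) h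
    simpa using this

/-- validity of a rotation point `r`. -/
structure Valid (a : List ℤ) (q : ℤ) (n r : ℕ) : Prop where
  hr : r ≤ n
  argmin : ∀ j ≤ n, Qf a q r ≤ Qf a q j
  lb : 1 - q ≤ (r : ℤ)
  ub : (r : ℤ) ≤ (n : ℤ) - q
  last : ∀ k, 0 < k → k < n →
    (r + k ≤ n → Qf a q (r + k) = Qf a q r → (k : ℤ) ≤ (n : ℤ) - r - q) ∧
    (n ≤ r + k → Qf a q (r + k - n) = Qf a q r → (k : ℤ) ≤ (n : ℤ) - r - q)

lemma valid_unique_aux {a : List ℤ} {q : ℤ} {n : ℕ} (hn : 1 ≤ n)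
    (hQn : Qf a q n = 0) {r1 r2 : ℕ}
    (h1 : Valid a q n r1) (h2 : Valid a q n r2) (hlt : r1 < r2) : False := by
  have hQeq : Qf a q r1 = Qf a q r2 :=
    le_antisymm (h1.argmin r2 h2.hr) (h2.argmin r1 h1.hr)
  rcases Nat.eq_zero_or_pos r1 with hz | hpos
  · -- r1 = 0
    subst hz
    have hq1 : (1:ℤ) ≤ q := by have := h1.lb; push_cast at this; linarith
    rcases eq_or_lt_of_le h2.hr with he | hlt2
    · -- r2 = n
      have := h2.ub
      rw [he] at this
      linarith
    · -- r2 < n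
      have hk := (h2.last (n - r2) (by omega) (by omega)).1
        (by omega)
        (by
          have h1' : r2 + (n - r2) = n := by have := h2.hr; omega
          rw [h1', hQn, ← hQeq, Qf_zero])
      have hc : ((n - r2 : ℕ) : ℤ) = (n : ℤ) - r2 := by
        have : r2 ≤ n := by omega
        push_cast [this]; ring
      rw [hc] at hk
      linarith
  · -- r1 ≥ 1
    have hk := (h2.last (r1 + (n - r2)) (by omega) (by have := h2.hr; omega)).2
      (by have := h2.hr; omega)
      (by
        have h1' : r2 + (r1 + (n - r2)) - n = r1 := by have := h2.hr; omega
        rw [h1']; exact hQeq)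
    have hc : ((r1 + (n - r2) : ℕ) : ℤ) = (r1 : ℤ) + n - r2 := by
      have : r2 ≤ n := h2.hr
      push_cast [this]; ring
    rw [hc] at hk
    have := h1.lb
    linarith

lemma valid_unique {a : List ℤ} {q : ℤ} {n : ℕ} (hn : 1 ≤ n)
    (hQn : Qf a q n = 0) {r1 r2 : ℕ}
    (h1 : Valid a q n r1) (h2 : Valid a q n r2) : r1 = r2 := by
  rcases lt_trichotomy r1 r2 with h | h | h
  · exact absurd (valid_unique_aux hn hQn h1 h2 h) (by simp)
  · exact h
  · exact absurd (valid_unique_aux hn hQn h2 h1 h) (by simp)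

section Bounds

variable {a : List ℤ} {q : ℤ} {n : ℕ}

/-- bound from entries `≤ n-1`: any low point below `n` satisfies `r ≤ n - q`. -/
lemma low_ub (hn : 1 ≤ n) (hlen : a.length = n)
    (hbd : ∀ x ∈ a, x ≤ (n : ℤ) - 1) (hQn : Qf a q n = 0)
    {r : ℕ} (hr : r < n) (hQr : Qf a q r ≤ 0) : (r : ℤ) ≤ (n : ℤ) - q := by
  set d : ℕ := n - r with hd
  have hd1 : 1 ≤ d := by omega
  have hdrop : (a.drop r).sum ≤ (d : ℤ) * ((n : ℤ) - 1) := by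
    have hlength : (a.drop r).length = d := by rw [List.length_drop]; omega
    calc (a.drop r).sum ≤ (a.drop r).length • ((n : ℤ) - 1) :=
          List.sum_le_card_nsmul _ _ (fun x hx => hbd x (List.mem_of_mem_drop hx))
      _ = (d : ℤ) * ((n : ℤ) - 1) := by rw [hlength, nsmul_eq_mul]
  have hsumsplit : (a.take r).sum + (a.drop r).sum = a.sum := List.sum_take_add_sum_drop a r
  have hQnval : a.sum - C n - q * n = 0 := by
    have := hQn; unfold Qf at this; rwa [List.take_of_length_le (by omega)] at this
  have hQrval : (a.take r).sum - C r - q * r ≤ 0 := hQr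
  have hCn : C n = C r + C d + (r : ℤ) * d := by
    rw [show n = r + d by omega, C_add]
  have h2C : 2 * C d = (d : ℤ) * ((d : ℤ) - 1) := two_C d
  have hcast : (d : ℤ) = (n : ℤ) - r := by omega
  nlinarith [hdrop, hsumsplit, hQnval, hQrval, hCn, h2C, hcast, hd1]

/-- bound from entries `≥ 0`: any low point `r ≥ 1` satisfies `1 - q ≤ r`. -/
lemma low_lb (hlen : a.length = n) (hbd : ∀ x ∈ a, 0 ≤ x)
    {r : ℕ} (hr1 : 1 ≤ r) (hQr : Qf a q r ≤ 0) : 1 - q ≤ (r : ℤ) := by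
  have hsum : 0 ≤ (a.take r).sum :=
    List.sum_nonneg (fun x hx => hbd x (List.mem_of_mem_take hx))
  have hQrval : (a.take r).sum - C r - q * r ≤ 0 := hQr
  have h2C : 2 * C r = (r : ℤ) * ((r : ℤ) - 1) := two_C r
  have hr1' : (1 : ℤ) ≤ r := by exact_mod_cast hr1
  nlinarith [hsum, hQrval, h2C, hr1']

lemma q_lb (hn : 1 ≤ n) (hlen : a.length = n) (hbd : ∀ x ∈ a, 0 ≤ x)
    (hQn : Qf a q n = 0) : 1 - q ≤ (n : ℤ) :=
  low_lb hlen hbd hn (le_of_eq hQn)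

end Bounds

lemma valid_exists {a : List ℤ} {q : ℤ} {n : ℕ} (hn : 1 ≤ n) (hlen : a.length = n)
    (hbd0 : ∀ x ∈ a, 0 ≤ x) (hbd1 : ∀ x ∈ a, x ≤ (n:ℤ) - 1)
    (hQn : Qf a q n = 0) : ∃ r, Valid a q n r := by
  set m0 : ℕ := (1 - q).toNat with hm0
  have hm0n : m0 ≤ n := by
    have := q_lb hn hlen hbd0 hQn
    omega
  obtain ⟨r1, hr1mem, hr1min⟩ :=
    Finset.exists_min_image (Finset.Icc m0 n) (Qf a q) ⟨n, Finset.mem_Icc.2 ⟨hm0n, le_refl n⟩⟩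
  set F : Finset ℕ := (Finset.Icc m0 n).filter (fun j => Qf a q j = Qf a q r1) with hF
  have hr1F : r1 ∈ F := Finset.mem_filter.2 ⟨hr1mem, rfl⟩
  set r : ℕ := F.min' ⟨r1, hr1F⟩ with hrdef
  have hrF : r ∈ F := Finset.min'_mem _ _
  have hrIcc : r ∈ Finset.Icc m0 n := (Finset.mem_filter.1 hrF).1
  have hrQ : Qf a q r = Qf a q r1 := (Finset.mem_filter.1 hrF).2
  have hrmin : ∀ j ∈ F, r ≤ j := fun j hj => Finset.min'_le _ _ hj
  have hrm0 : m0 ≤ r := (Finset.mem_Icc.1 hrIcc).1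
  have hrn : r ≤ n := (Finset.mem_Icc.1 hrIcc).2
  have hQr0 : Qf a q r ≤ 0 := by
    have := hr1min n (Finset.mem_Icc.2 ⟨hm0n, le_refl n⟩)
    rw [hrQ, ← hQn] at *
    exact this
  have hargmin : ∀ j ≤ n, Qf a q r ≤ Qf a q j := by
    intro j hj
    by_cases hjm : m0 ≤ j
    · rw [hrQ]; exact hr1min j (Finset.mem_Icc.2 ⟨hjm, hj⟩)
    · push_neg at hjm
      rcases Nat.eq_zero_or_pos j with rfl | hj1
      · rw [Qf_zero]; exact hQr0
      · by_contra hcon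
        push_neg at hcon
        have hQj : Qf a q j ≤ 0 := by linarith
        have := low_lb hlen hbd0 hj1 hQj
        omega
  have hq_of_rn : r = n → q ≤ 0 := by
    intro hrn'
    by_contra hq
    push_neg at hq
    have hm00 : m0 = 0 := by omega
    have h0F : 0 ∈ F := by
      refine Finset.mem_filter.2 ⟨Finset.mem_Icc.2 ⟨by omega, by omega⟩, ?_⟩
      rw [Qf_zero, ← hrQ, hrn', hQn]
    have := hrmin 0 h0F
    omega
  refine ⟨r, hrn, hargmin, ?_, ?_, ?_⟩
  · -- lb
    rcases le_or_gt q 0 with h | h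
    · have : (m0 : ℤ) = 1 - q := by omega
      have : (1:ℤ) - q ≤ r := by omega
      exact this
    · have : (0:ℤ) ≤ r := by positivity
      linarith
  · -- ub
    rcases eq_or_lt_of_le hrn with heq | hlt
    · have := hq_of_rn heq
      rw [heq]
      linarith
    · exact low_ub hn hlen hbd1 hQn hlt hQr0
  · -- last
    intro k hk0 hkn
    have hq_of_split : Qf a q n = Qf a q r → (0:ℤ) ≤ (n:ℤ) - r - q - k → True := fun _ _ => trivial
    constructor
    · intro hrkn hQeq2
      rcases eq_or_lt_of_le hrkn with heq | hlt
      · -- r + k = n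
        have hQrn : Qf a q r = 0 := by rw [← hQeq2, heq, hQn]
        have hq0 : q ≤ 0 := by
          by_contra hq
          push_neg at hq
          have hm00 : m0 = 0 := by omega
          have h0F : 0 ∈ F := by
            refine Finset.mem_filter.2 ⟨Finset.mem_Icc.2 ⟨by omega, by omega⟩, ?_⟩
            rw [Qf_zero, ← hrQ, hQrn]
          have := hrmin 0 h0F
          omega
        have : (r:ℤ) + k = n := by omega
        linarith
      · have hQrk : Qf a q (r + k) ≤ 0 := by rw [hQeq2]; exact hQr0
        have := low_ub hn hlen hbd1 hQn hlt hQrk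
        push_cast at this
        linarith
    · intro hnrk hQeq2
      set j : ℕ := r + k - n with hj
      rcases Nat.eq_zero_or_pos j with hj0 | hj1
      · -- r + k = n
        have heq : r + k = n := by omega
        have hQrn : Qf a q r = 0 := by rw [← hQeq2, hj0, Qf_zero]
        have hq0 : q ≤ 0 := by
          by_contra hq
          push_neg at hq
          have hm00 : m0 = 0 := by omega
          have h0F : 0 ∈ F := by
            refine Finset.mem_filter.2 ⟨Finset.mem_Icc.2 ⟨by omega, by omega⟩, ?_⟩
            rw [Qf_zero, ← hrQ, hQrn]
          have := hrmin 0 h0F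
          omega
        have : (r:ℤ) + k = n := by omega
        linarith
      · have hjr : j < r := by omega
        have hQj : Qf a q j ≤ 0 := by rw [hQeq2]; exact hQr0
        have hlb := low_lb hlen hbd0 hj1 hQj
        have hjm0 : m0 ≤ j := by omega
        have hjF : j ∈ F := by
          refine Finset.mem_filter.2 ⟨Finset.mem_Icc.2 ⟨hjm0, by omega⟩, ?_⟩
          rw [hQeq2, hrQ]
        have := hrmin j hjF
        omega


section Rot
variable {a : List ℤ} {q : ℤ} {n r d : ℕ} {i : ℤ}

lemma sorted_take_le {α : Type*} [LinearOrder α] {a : List α} (hs : a.Pairwise (· ≤ ·)) {r j : ℕ} (hj : j < a.length)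
    (hr : r ≤ j + 1) {x : α} (hx : x ∈ a.take r) : x ≤ a[j] := by
  obtain ⟨m, hm, rfl⟩ := List.mem_iff_getElem.1 hx
  have hm' : m < r := by rw [List.length_take] at hm; omega
  rw [List.getElem_take]
  exact sorted_getElem_le hs (by omega) hj

lemma sorted_drop_le {α : Type*} [LinearOrder α] {a : List α} (hs : a.Pairwise (· ≤ ·)) {r : ℕ} (hr : r < a.length)
    {x : α} (hx : x ∈ a.drop r) : a[r] ≤ x := by
  obtain ⟨j, hj, rfl⟩ := List.mem_iff_getElem.1 hx
  rw [List.getElem_drop]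
  exact sorted_getElem_le hs (by omega) (by rw [List.length_drop] at hj; omega)

lemma rot_sorted (hsort : a.Pairwise (· ≤ ·))
    (hbd0 : ∀ x ∈ a, 0 ≤ x) (hbd1 : ∀ x ∈ a, x ≤ (n:ℤ) - 1) :
    (rot a r i n).Pairwise (· ≤ ·) := by
  unfold rot
  rw [List.pairwise_append]
  refine ⟨?_, ?_, ?_⟩
  · exact (List.Pairwise.sublist (List.drop_sublist _ _) hsort).map _
      (fun x y hxy => add_le_add_left hxy _)
  · exact (List.Pairwise.sublist (List.take_sublist _ _) hsort).map _
      (fun x y hxy => add_le_add_left hxy _)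
  · intro x hx y hy
    obtain ⟨u, hu, rfl⟩ := List.mem_map.1 hx
    obtain ⟨v, hv, rfl⟩ := List.mem_map.1 hy
    have h1 : u ≤ (n:ℤ) - 1 := hbd1 u (List.mem_of_mem_drop hu)
    have h2 : 0 ≤ v := hbd0 v (List.mem_of_mem_take hv)
    linarith

lemma rot_entry_bounds (hn : 1 ≤ n) (hsort : a.Pairwise (· ≤ ·)) (hlen : a.length = n)
    (hbd0 : ∀ x ∈ a, 0 ≤ x) (hbd1 : ∀ x ∈ a, x ≤ (n:ℤ) - 1)
    (hrd : r + d = n) (hi : i = (d:ℤ) - q) (hv : Valid a q n r) :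
    ∀ x ∈ rot a r i n, 0 ≤ x ∧ x ≤ (n:ℤ) - 1 := by
  have hc : (n:ℤ) = (r:ℤ) + d := by exact_mod_cast hrd.symm
  intro x hx
  rcases List.mem_append.1 hx with hx1 | hx2
  · obtain ⟨u, hu, rfl⟩ := List.mem_map.1 hx1
    have hrn : r < a.length := by
      by_contra hcon
      push_neg at hcon
      rw [List.drop_eq_nil_of_le hcon] at hu
      simp at hu
    have h1 : a[r] ≤ u := sorted_drop_le hsort hrn hu
    have h2 : (r:ℤ) + q ≤ a[r] := by
      have hstep := Qf_succ a q r (by omega)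
      have := hv.argmin (r+1) (by omega)
      push_cast at hstep ⊢
      linarith
    have h3 : u ≤ (n:ℤ) - 1 := hbd1 u (List.mem_of_mem_drop hu)
    have h4 : i ≤ (n:ℤ) - 1 := by
      have hlb := hv.lb
      rw [hi]; linarith
    constructor
    · rw [hi] at *; linarith
    · linarith
  · obtain ⟨v, hv2, rfl⟩ := List.mem_map.1 hx2
    obtain ⟨j, rfl⟩ : ∃ j, r = j + 1 := by
      refine ⟨r - 1, ?_⟩
      by_contra hcon
      have : r = 0 := by omega
      subst this
      simp at hv2
    have hjlen : j < a.length := by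
      by_contra hcon
      push_neg at hcon
      rw [List.take_of_length_le (by omega)] at hv2
      have hmem : v ∈ a := hv2
      have := List.length_pos_of_mem hmem
      omega
    have h1 : v ≤ a[j] := sorted_take_le hsort hjlen (le_refl _) hv2
    have h2 : a[j] ≤ (j:ℤ) + q := by
      have hstep := Qf_succ a q j (by omega)
      have := hv.argmin j (by omega)
      linarith
    have h3 : 0 ≤ v := hbd0 v (List.mem_of_mem_take hv2)
    have h4 : 0 ≤ i := by
      have hub := hv.ub
      rw [hi]; linarith
    constructor
    · linarith
    · rw [hi] at *
      push_cast at hc ⊢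
      linarith

lemma prefix_ge_of_argmin (hlen : a.length = n) (hrd : r + d = n) (hi : i = (d:ℤ) - q)
    (hQn : Qf a q n = 0) (hv : Valid a q n r) :
    ∀ k ≤ n, C k ≤ ((rot a r i n).take k).sum := by
  intro k hk
  rcases le_or_gt k d with h | h
  · rw [rot_take_sum_le hlen hrd hi h]
    have := hv.argmin (r + k) (by omega)
    linarith
  · rw [rot_take_sum_ge hlen hrd hi hQn (by omega) hk]
    have := hv.argmin (k - d) (by omega)
    linarith

lemma rot_sum_eq (hlen : a.length = n) (hrd : r + d = n) (hi : i = (d:ℤ) - q)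
    (hQn : Qf a q n = 0) : ((rot a r i n).take n).sum = C n := by
  rw [rot_take_sum_ge hlen hrd hi hQn (by omega) (le_refl n)]
  have : n - d = r := by omega
  rw [this]
  ring

lemma split_le_of_valid (hlen : a.length = n) (hrd : r + d = n) (hi : i = (d:ℤ) - q)
    (hQn : Qf a q n = 0) (hv : Valid a q n r) {k : ℕ} (hk0 : 0 < k) (hkn : k < n)
    (heq : ((rot a r i n).take k).sum = C k) : (k : ℤ) ≤ i := by
  have hc : (n:ℤ) = (r:ℤ) + d := by exact_mod_cast hrd.symm
  rcases le_or_gt k d with h | h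
  · rw [rot_take_sum_le hlen hrd hi h] at heq
    have := (hv.last k hk0 hkn).1 (by omega) (by linarith)
    rw [hi]; linarith
  · rw [rot_take_sum_ge hlen hrd hi hQn (by omega) (by omega)] at heq
    have hne : r + k - n = k - d := by omega
    have := (hv.last k hk0 hkn).2 (by omega) (by rw [hne]; linarith)
    rw [hi]; linarith

lemma argmin_of_prefix_ge (hlen : a.length = n) (hrd : r + d = n) (hi : i = (d:ℤ) - q)
    (hQn : Qf a q n = 0)
    (hpre : ∀ k ≤ n, C k ≤ ((rot a r i n).take k).sum) :
    ∀ j ≤ n, Qf a q r ≤ Qf a q j := by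
  intro j hj
  rcases le_or_gt r j with h | h
  · have hk : j - r ≤ d := by omega
    have := hpre (j - r) (by omega)
    rw [rot_take_sum_le hlen hrd hi hk] at this
    have hrj : r + (j - r) = j := by omega
    rw [hrj] at this
    linarith
  · have := hpre (j + d) (by omega)
    rw [rot_take_sum_ge hlen hrd hi hQn (by omega) (by omega)] at this
    have hjd : j + d - d = j := by omega
    rw [hjd] at this
    linarith

lemma last_of_split_le (hlen : a.length = n) (hrd : r + d = n) (hi : i = (d:ℤ) - q)
    (hQn : Qf a q n = 0)
    (hsplit : ∀ k, 0 < k → k < n → ((rot a r i n).take k).sum = C k → (k:ℤ) ≤ i) :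
    ∀ k, 0 < k → k < n →
      (r + k ≤ n → Qf a q (r + k) = Qf a q r → (k : ℤ) ≤ (n : ℤ) - r - q) ∧
      (n ≤ r + k → Qf a q (r + k - n) = Qf a q r → (k : ℤ) ≤ (n : ℤ) - r - q) := by
  intro k hk0 hkn
  have hc : (n:ℤ) = (r:ℤ) + d := by exact_mod_cast hrd.symm
  constructor
  · intro hrkn hQeq
    have hsum := rot_take_sum_le hlen hrd hi (k := k) (by omega)
    rw [hQeq] at hsum
    have := hsplit k hk0 hkn (by rw [hsum]; ring)
    rw [hi] at this
    linarith
  · intro hnrk hQeq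
    have hsum := rot_take_sum_ge hlen hrd hi hQn (k := k) (by omega) (by omega)
    have hne : r + k - n = k - d := by omega
    rw [← hne, hQeq] at hsum
    have := hsplit k hk0 hkn (by rw [hsum]; ring)
    rw [hi] at this
    linarith

end Rot

section NatSide

lemma choose_two_succ (k : ℕ) : (k+1).choose 2 = k.choose 2 + k := by
  have := C_succ k
  unfold C at this
  exact_mod_cast this

lemma choose_two_add (m k : ℕ) : (m + k).choose 2 = m.choose 2 + k.choose 2 + m * k := by
  have := C_add m k
  unfold C at this
  exact_mod_cast this

lemma sum_map_add_nat (l : List ℕ) (m : ℕ) :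
    (l.map (· + m)).sum = l.sum + l.length * m := by
  induction l with
  | nil => simp
  | cons a t ih => simp [ih]; ring

lemma sum_map_sub_nat (l : List ℕ) (m : ℕ) (h : ∀ x ∈ l, m ≤ x) :
    (l.map (fun x => x - m)).sum + l.length * m = l.sum := by
  induction l with
  | nil => simp
  | cons a t ih =>
      simp only [List.map_cons, List.sum_cons, List.length_cons]
      have h1 : m ≤ a := h a (by simp)
      have h2 := ih (fun x hx => h x (by simp [hx]))
      have h3 : (t.length + 1) * m = t.length * m + m := by ring
      omega

/-- extraction: membership in `Lset` yields the "all split points `≤ i`" property. -/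
lemma Lset_splits {n : ℕ} {p : List ℕ × ℕ} (hp : p ∈ Lset n) :
    ∀ k, 0 < k → k < n → (p.1.take k).sum = k.choose 2 → k ≤ p.2 := by
  obtain ⟨hscore, hlen, u, t, hdecomp, hu, ht, hit, hi⟩ := hp
  intro k hk0 hkn hsum
  set m := u.length with hm
  have hmt : m + t.length = n := by
    rw [← hlen, hdecomp]; simp [dsum]; exact hm
  have him : m ≤ p.2 := by omega
  rcases le_or_gt k m with h | h
  · omega
  · exfalso
    have htk : k - m ≤ t.length := by omega
    have htake : p.1.take k = u ++ ((t.map (· + m)).take (k - m)) := by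
      rw [hdecomp, dsum, List.take_append,
        List.take_of_length_le (by omega), hm]
    have htake2 : (t.map (· + m)).take (k - m) = (t.take (k - m)).map (· + m) := by
      rw [List.map_take]
    have hlen2 : (t.take (k - m)).length = k - m := by
      rw [List.length_take]; omega
    have hsum2 : (p.1.take k).sum = u.sum + (t.take (k - m)).sum + (k - m) * m := by
      rw [htake, List.sum_append, htake2, sum_map_add_nat, hlen2]
      omega
    have husum : u.sum = m.choose 2 := hu.2.2.2
    have hstrict : (k - m).choose 2 < (t.take (k - m)).sum :=
      ht.2.2 (k - m) (by omega) (by omega)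
    have hco : k.choose 2 = m.choose 2 + (k - m).choose 2 + m * (k - m) := by
      conv_lhs => rw [show k = m + (k - m) by omega]
      rw [choose_two_add]
    have hcomm : m * (k - m) = (k - m) * m := Nat.mul_comm _ _
    have := hsum
    rw [hsum2, hco] at this
    omega

/-- construction: a score sequence with all split points `≤ i` lies in `Lset`. -/
lemma Lset_mk {n : ℕ} (hn : 1 ≤ n) {s : List ℕ} {i : ℕ} (hscore : IsScoreSeq s)
    (hlen : s.length = n) (hi : i ≤ n - 1)
    (hsplit : ∀ k, 0 < k → k < n → (s.take k).sum = k.choose 2 → k ≤ i) :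
    (s, i) ∈ Lset n := by
  obtain ⟨hsort, hbd, hpre, hsum⟩ := hscore
  -- the set of split points
  set Ms : Finset ℕ := (Finset.range n).filter (fun k => (s.take k).sum = k.choose 2) with hMs
  have h0M : 0 ∈ Ms := by
    refine Finset.mem_filter.2 ⟨Finset.mem_range.2 (by omega), by simp⟩
  set m : ℕ := Ms.max' ⟨0, h0M⟩ with hmdef
  have hmM : m ∈ Ms := Finset.max'_mem _ _
  have hmn : m < n := Finset.mem_range.1 (Finset.mem_filter.1 hmM).1
  have hmsum : (s.take m).sum = m.choose 2 := (Finset.mem_filter.1 hmM).2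
  have hmmax : ∀ k ∈ Ms, k ≤ m := fun k hk => Finset.le_max' _ _ hk
  -- prefix sums are ≥, and for j in (m, n) strictly greater
  have hpre' : ∀ k, k ≤ n → k.choose 2 ≤ (s.take k).sum := by
    intro k hk
    rcases Nat.eq_zero_or_pos k with rfl | hk0
    · simp
    · rcases eq_or_lt_of_le hk with rfl | hkn
      · rw [List.take_of_length_le (by omega), hsum, hlen]
      · exact hpre k hk0 (by omega)
  have hstrict : ∀ k, m < k → k < n → k.choose 2 < (s.take k).sum := by
    intro k hmk hkn
    rcases eq_or_lt_of_le (hpre' k (by omega)) with heq | h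
    · exfalso
      have : k ∈ Ms := Finset.mem_filter.2 ⟨Finset.mem_range.2 hkn, heq.symm⟩
      have := hmmax k this
      omega
    · exact h
  -- entries of the tail are ≥ m
  have hsm : ∀ x ∈ s.drop m, m ≤ x := by
    rcases Nat.eq_zero_or_pos m with hm0 | hm1
    · intro x _; omega
    · have hmlen : m < s.length := by omega
      have hsm' : m ≤ s[m] := by
        have h1 : (s.take (m+1)).sum = (s.take m).sum + s[m] :=
          List.sum_take_succ _ _ hmlen
        have h2 : (m+1).choose 2 ≤ (s.take (m+1)).sum := hpre' (m+1) (by omega)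
        rw [choose_two_succ] at h2
        omega
      intro x hx
      exact le_trans hsm' (sorted_drop_le hsort hmlen hx)
  have hulen : (s.take m).length = m := by rw [List.length_take]; omega
  refine ⟨⟨hsort, hbd, hpre, hsum⟩, hlen, s.take m, (s.drop m).map (fun x => x - m),
    ?_, ?_, ?_, ?_, by omega⟩
  · -- decomposition
    rw [dsum, hulen]
    have : ((s.drop m).map (fun x => x - m)).map (· + m) = s.drop m := by
      rw [List.map_map]
      have : ∀ x ∈ s.drop m, (((· + m) ∘ fun x => x - m) x) = id x := by
        intro x hx
        have := hsm x hx
        simp; omega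
      rw [List.map_congr_left this, List.map_id]
    rw [this, List.take_append_drop]
  · -- u is a score sequence
    constructor
    · exact List.Pairwise.sublist (List.take_sublist _ _) hsort
    constructor
    · -- entries < m
      intro x hx
      rw [hulen]
      rcases Nat.eq_zero_or_pos m with hm0 | hm1
      · rw [hm0] at hx; simp at hx
      · have hj : m - 1 < s.length := by omega
        have h1 : x ≤ s[m-1]'hj := sorted_take_le hsort hj (by omega) hx
        have h2 : s[m-1]'hj ≤ m - 1 := by
          have he : (s.take m).sum = (s.take (m-1)).sum + s[m-1]'hj := by
            have := List.sum_take_succ s (m-1) hj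
            rw [show m - 1 + 1 = m by omega] at this
            exact this
          have h3 : (m-1).choose 2 ≤ (s.take (m-1)).sum := hpre' (m-1) (by omega)
          have h4 : m.choose 2 = (m-1).choose 2 + (m-1) := by
            conv_lhs => rw [show m = (m-1) + 1 by omega]
            rw [choose_two_succ]
          omega
        omega
    constructor
    · -- prefix sums
      intro k hk0 hkm
      rw [hulen] at hkm
      rw [List.take_take, min_eq_left (by omega)]
      exact hpre' k (by omega)
    · -- total sum
      rw [hulen, hmsum]
  · -- t is a strong score sequence
    have htlen : ((s.drop m).map (fun x => x - m)).length = n - m := by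
      rw [List.length_map, List.length_drop]; omega
    have htpre : ∀ k, k ≤ n - m →
        ((((s.drop m).map (fun x => x - m)).take k).sum) + m.choose 2 + k * m
          = (s.take (m + k)).sum := by
      intro k hk
      rw [← List.map_take]
      have hlen3 : ((s.drop m).take k).length = k := by
        rw [List.length_take, List.length_drop]; omega
      have := sum_map_sub_nat ((s.drop m).take k) m
        (fun x hx => hsm x (List.mem_of_mem_take hx))
      rw [hlen3] at this
      have hsplit2 : (s.take (m+k)).sum = (s.take m).sum + ((s.drop m).take k).sum := by
        rw [List.take_add, List.sum_append]
      omega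
    constructor
    · -- t is a score sequence
      constructor
      · refine List.Pairwise.map _ ?_ (List.Pairwise.sublist (List.drop_sublist _ _) hsort)
        intro x y hxy
        omega
      constructor
      · intro x hx
        rw [htlen]
        obtain ⟨y, hy, rfl⟩ := List.mem_map.1 hx
        have h1 : y < n := by
          have := hbd y (List.mem_of_mem_drop hy)
          omega
        have h2 : m ≤ y := hsm y hy
        omega
      constructor
      · intro k hk0 hkn
        rw [htlen] at hkn
        have h1 := htpre k (by omega)
        have h2 : (m + k).choose 2 ≤ (s.take (m+k)).sum := hpre' (m+k) (by omega)
        rw [choose_two_add] at h2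
        have hcm : m * k = k * m := Nat.mul_comm _ _
        omega
      · rw [htlen]
        have h1 := htpre (n - m) (le_refl _)
        have htake : s.take n = s := List.take_of_length_le (by omega)
        rw [show m + (n - m) = n by omega, htake, hsum, hlen] at h1
        have h2 : n.choose 2 = m.choose 2 + (n-m).choose 2 + m * (n-m) := by
          conv_lhs => rw [show n = m + (n - m) by omega]
          rw [choose_two_add]
        have h3 : (((s.drop m).map (fun x => x - m)).take (n-m)) = (s.drop m).map (fun x => x - m) := by
          rw [List.take_of_length_le (by omega)]
        rw [h3] at h1
        have hcm : m * (n - m) = (n - m) * m := Nat.mul_comm _ _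
        omega
    constructor
    · -- nonempty
      intro hcon
      have := htlen
      rw [hcon] at this
      simp at this
      omega
    · -- strict prefix sums
      intro k hk0 hkn
      rw [htlen] at hkn
      have h1 := htpre k (by omega)
      have h2 : (m + k).choose 2 < (s.take (m+k)).sum := hstrict (m+k) (by omega) (by omega)
      rw [choose_two_add] at h2
      have hcm : m * k = k * m := Nat.mul_comm _ _
      omega
  · -- last summand reaches i : n - t.length ≤ i
    rcases Nat.eq_zero_or_pos m with hm0 | hm1
    · rw [List.length_map, List.length_drop, hlen]; omega
    · have := hsplit m hm1 hmn hmsum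
      rw [List.length_map, List.length_drop, hlen]
      omega

end NatSide

section Forward
variable {a : List ℤ} {q : ℤ} {n r d : ℕ} {i : ℤ}

lemma rot_score (hn : 1 ≤ n) (hsort : a.Pairwise (· ≤ ·)) (hlen : a.length = n)
    (hbd0 : ∀ x ∈ a, 0 ≤ x) (hbd1 : ∀ x ∈ a, x ≤ (n:ℤ) - 1)
    (hrd : r + d = n) (hi : i = (d:ℤ) - q) (hQn : Qf a q n = 0) (hv : Valid a q n r) :
    IsScoreSeq ((rot a r i n).map Int.toNat) ∧ ((rot a r i n).map Int.toNat).length = n ∧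
    (∀ k, 0 < k → k < n →
      (((rot a r i n).map Int.toNat).take k).sum = k.choose 2 → (k:ℤ) ≤ i) := by
  have hb := rot_entry_bounds hn hsort hlen hbd0 hbd1 hrd hi hv
  have hrlen : (rot a r i n).length = n := rot_length a r i n hlen hv.hr
  have hlen2 : ((rot a r i n).map Int.toNat).length = n := by rw [List.length_map, hrlen]
  have hcast : ∀ k, ((((rot a r i n).map Int.toNat).take k).sum : ℤ)
      = ((rot a r i n).take k).sum := by
    intro k
    rw [← List.map_take]
    exact sum_toNat_cast _ (fun x hx => (hb x (List.mem_of_mem_take hx)).1)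
  have hpre := prefix_ge_of_argmin hlen hrd hi hQn hv
  refine ⟨⟨?_, ?_, ?_, ?_⟩, hlen2, ?_⟩
  · refine List.Pairwise.map _ ?_ (rot_sorted hsort hbd0 hbd1)
    intro x y hxy
    exact Int.toNat_le_toNat hxy
  · intro x hx
    rw [hlen2]
    obtain ⟨z, hz, rfl⟩ := List.mem_map.1 hx
    have := hb z hz
    omega
  · intro k hk0 hkn
    rw [hlen2] at hkn
    have h1 := hpre k (by omega)
    have h2 := hcast k
    unfold C at h1
    omega
  · have h1 := rot_sum_eq hlen hrd hi hQn
    have h2 := hcast n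
    have e1 : (rot a r i n).take n = rot a r i n := List.take_of_length_le (by omega)
    have e2 : ((rot a r i n).map Int.toNat).take n = (rot a r i n).map Int.toNat :=
      List.take_of_length_le (by omega)
    rw [e1] at h1
    rw [e1, e2] at h2
    rw [hlen2]
    unfold C at h1
    omega
  · intro k hk0 hkn hksum
    have h2 := hcast k
    rw [hksum] at h2
    refine split_le_of_valid hlen hrd hi hQn hv hk0 hkn ?_
    unfold C
    omega

end Forward

section Glue

lemma Qf_q_unique {a : List ℤ} {n : ℕ} {q q' : ℤ} (hn : 1 ≤ n)
    (h : Qf a q n = 0) (h' : Qf a q' n = 0) : q = q' := by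
  unfold Qf at h h'
  have hmul : q * n = q' * n := by linarith
  have hn' : (n:ℤ) ≠ 0 := by exact_mod_cast (by omega : n ≠ 0)
  exact mul_right_cancel₀ hn' hmul

lemma sorted_dropWhile_ge {s : List ℕ} (hs : s.Pairwise (· ≤ ·)) (i : ℕ) :
    ∀ x ∈ s.dropWhile (fun y => y < i), i ≤ x := by
  induction s with
  | nil => simp
  | cons h t ih =>
      intro x hx
      rw [List.dropWhile_cons] at hx
      by_cases hcase : h < i
      · rw [if_pos (by simpa using hcase)] at hx
        exact ih hs.of_cons x hx
      · rw [if_neg (by simpa using hcase)] at hx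
        rcases List.mem_cons.1 hx with rfl | hx'
        · omega
        · have := List.rel_of_pairwise_cons hs hx'
          omega

lemma val_sub_of_lt {n : ℕ} (hn : 1 ≤ n) {x i : ℕ} (hx : x < n) (hi : i < n) (hxi : x < i) :
    ((x : ZMod n) - (i : ZMod n)).val = x + (n - i) := by
  haveI : NeZero n := ⟨by omega⟩
  have h1 : ((x + (n - i) : ℕ) : ZMod n) = (x : ZMod n) - (i : ZMod n) := by
    push_cast [show i ≤ n by omega]
    have := ZMod.natCast_self n
    rw [this]
    ring
  rw [← h1, ZMod.val_cast_of_lt (by omega)]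

lemma val_sub_of_ge {n : ℕ} (hn : 1 ≤ n) {x i : ℕ} (hx : x < n) (hxi : i ≤ x) :
    ((x : ZMod n) - (i : ZMod n)).val = x - i := by
  haveI : NeZero n := ⟨by omega⟩
  have h1 : ((x - i : ℕ) : ZMod n) = (x : ZMod n) - (i : ZMod n) := by
    push_cast [hxi]
    ring
  rw [← h1, ZMod.val_cast_of_lt (by omega)]

end Glue

section Analyze

lemma coeM_eq {n : ℕ} (m : Multiset ℕ) :
    ((do let a ← m; pure ((a : ℕ) : ZMod n)) : Multiset (ZMod n))
      = m.map (fun x : ℕ => (x : ZMod n)) := by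
  show m >>= (fun a => pure ((a : ℕ) : ZMod n)) = _
  rw [bind_pure_comp]
  rfl

lemma fmap_norm {n : ℕ} (l : List ℕ) (i : ℕ) :
    (Multiset.map (fun x => ((x : ZMod n) - (i : ZMod n))) (↑l : Multiset ℕ))
      = ↑(l.map (fun x : ℕ => (x : ZMod n) - (i : ZMod n))) := by
  rw [coeM_eq, Multiset.map_coe, Multiset.map_coe, List.map_map]
  rfl

set_option maxHeartbeats 1000000 in
lemma analyze {n : ℕ} (hn : 1 ≤ n) {p : List ℕ × ℕ} (hp : p ∈ Lset n)
    {a0 : List ℕ} (hsort0 : a0.Pairwise (· ≤ ·))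
    (ha0 : (↑a0 : Multiset ℕ)
      = ↑(p.1.map (fun x : ℕ => ((x : ZMod n) - (p.2 : ZMod n)).val))) :
    ∃ c : ℕ, c ≤ n ∧
      Qf (a0.map (fun x : ℕ => (x : ℤ))) ((c : ℤ) - p.2) n = 0 ∧
      Valid (a0.map (fun x : ℕ => (x : ℤ))) ((c : ℤ) - p.2) n (n - c) ∧
      p.1.map (fun x : ℕ => (x : ℤ))
        = rot (a0.map (fun x : ℕ => (x : ℤ))) (n - c) ((p.2 : ℤ)) n := by
  obtain ⟨u, t, _, _, _, _, hi2⟩ := hp.2.2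
  have hsplits := Lset_splits hp
  obtain ⟨hsort, hbd, hpre, hsum⟩ := hp.1
  have hlen : p.1.length = n := hp.2.1
  have hp2n : p.2 < n := by omega
  have hbdn : ∀ x ∈ p.1, x < n := by rw [← hlen]; exact hbd
  have hpreN : ∀ k ≤ n, k.choose 2 ≤ (p.1.take k).sum := by
    intro k hk
    rcases Nat.eq_zero_or_pos k with rfl | hk0
    · simp
    · rcases eq_or_lt_of_le hk with rfl | hkn
      · rw [List.take_of_length_le (by omega), hsum, hlen]
      · exact hpre k hk0 (by omega)
  set c : ℕ := (p.1.takeWhile (fun x => x < p.2)).length with hc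
  have hcle : c ≤ n := by
    rw [hc, ← hlen]
    exact (List.takeWhile_prefix _).length_le
  have htake_eq : p.1.take c = p.1.takeWhile (fun x => x < p.2) :=
    (List.prefix_iff_eq_take.1 (List.takeWhile_prefix _)).symm
  have hdrop_eq : p.1.drop c = p.1.dropWhile (fun x => x < p.2) := by
    conv_lhs => rw [← List.takeWhile_append_dropWhile (p := fun x => x < p.2) (l := p.1)]
    exact List.drop_left' rfl
  have hlt_take : ∀ x ∈ p.1.take c, x < p.2 := by
    rw [htake_eq]
    intro x hx
    simpa using List.mem_takeWhile_imp hx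
  have hge_drop : ∀ x ∈ p.1.drop c, p.2 ≤ x := by
    rw [hdrop_eq]
    exact sorted_dropWhile_ge hsort p.2
  set L0 : List ℕ := (p.1.drop c).map (fun x => x - p.2)
      ++ (p.1.take c).map (fun x => x + (n - p.2)) with hL0
  have hml : (↑L0 : Multiset ℕ)
      = ↑(p.1.map (fun x : ℕ => ((x : ZMod n) - (p.2 : ZMod n)).val)) := by
    rw [Multiset.coe_eq_coe]
    have hsplit2 : p.1.map (fun x : ℕ => ((x : ZMod n) - (p.2 : ZMod n)).val)
        = (p.1.take c).map (fun x => x + (n - p.2)) ++ (p.1.drop c).map (fun x => x - p.2) := by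
      conv_lhs => rw [← List.take_append_drop c p.1]
      rw [List.map_append]
      congr 1
      · refine List.map_congr_left ?_
        intro x hx
        have h1 := hlt_take x hx
        have h2 := hbdn x (List.mem_of_mem_take hx)
        exact val_sub_of_lt hn h2 hp2n h1
      · refine List.map_congr_left ?_
        intro x hx
        have h1 := hge_drop x hx
        have h2 := hbdn x (List.mem_of_mem_drop hx)
        exact val_sub_of_ge hn h2 h1
    rw [hsplit2]
    exact List.perm_append_comm
  have hL0sorted : L0.Pairwise (· ≤ ·) := by
    rw [hL0, List.pairwise_append]
    refine ⟨?_, ?_, ?_⟩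
    · exact (List.Pairwise.sublist (List.drop_sublist _ _) hsort).map _ (fun x y h => by omega)
    · exact (List.Pairwise.sublist (List.take_sublist _ _) hsort).map _ (fun x y h => by omega)
    · intro x hx y hy
      obtain ⟨u1, hu1, rfl⟩ := List.mem_map.1 hx
      obtain ⟨v1, hv1, rfl⟩ := List.mem_map.1 hy
      have e1 := hbdn u1 (List.mem_of_mem_drop hu1)
      have e2 := hge_drop u1 hu1
      have e3 := hlt_take v1 hv1
      omega
  have ha0L0 : a0 = L0 := by
    apply List.Perm.eq_of_pairwise' hsort0 hL0sorted
    rw [← Multiset.coe_eq_coe, ha0, hml]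
  subst ha0L0
  -- length facts
  have hlenB1 : ((p.1.drop c).map (fun x => x - p.2)).length = n - c := by
    rw [List.length_map, List.length_drop, hlen]
  have hlenB2 : ((p.1.take c).map (fun x => x + (n - p.2))).length = c := by
    rw [List.length_map, List.length_take, hlen]; omega
  have hlenL0 : L0.length = n := by
    rw [hL0, List.length_append, hlenB1, hlenB2]; omega
  set aZ : List ℤ := L0.map (fun x : ℕ => (x : ℤ)) with haZ
  have hlenaZ : aZ.length = n := by rw [haZ, List.length_map, hlenL0]
  -- the rotation identity
  have hrot : p.1.map (fun x : ℕ => (x : ℤ)) = rot aZ (n - c) ((p.2 : ℤ)) n := by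
    have hmapL0 : aZ = ((p.1.drop c).map (fun x => x - p.2)).map (fun x : ℕ => (x : ℤ))
        ++ ((p.1.take c).map (fun x => x + (n - p.2))).map (fun x : ℕ => (x : ℤ)) := by
      rw [haZ, hL0, List.map_append]
    have htk : aZ.take (n - c)
        = ((p.1.drop c).map (fun x => x - p.2)).map (fun x : ℕ => (x : ℤ)) := by
      rw [hmapL0]
      exact List.take_left' (by rw [List.length_map, hlenB1])
    have hdr : aZ.drop (n - c)
        = ((p.1.take c).map (fun x => x + (n - p.2))).map (fun x : ℕ => (x : ℤ)) := by
      rw [hmapL0]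
      exact List.drop_left' (by rw [List.length_map, hlenB1])
    rw [rot, htk, hdr]
    simp only [List.map_map]
    conv_lhs => rw [← List.take_append_drop c p.1, List.map_append]
    congr 1
    · refine List.map_congr_left ?_
      intro x hx
      simp only [Function.comp_apply]
      have := hp2n
      omega
    · refine List.map_congr_left ?_
      intro x hx
      simp only [Function.comp_apply]
      have := hge_drop x hx
      omega
  -- Qf at n vanishes
  have hQn : Qf aZ ((c : ℤ) - p.2) n = 0 := by
    unfold Qf
    rw [List.take_of_length_le (le_of_eq hlenaZ)]
    have hs1 := congrArg List.sum hrot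
    rw [rot, List.sum_append, sum_map_add, sum_map_add] at hs1
    have e1 : (aZ.drop (n - c)).length = c := by
      rw [List.length_drop, hlenaZ]; omega
    have e2 : (aZ.take (n - c)).length = n - c := by
      rw [List.length_take, hlenaZ]; omega
    have e3 : (aZ.take (n - c)).sum + (aZ.drop (n - c)).sum = aZ.sum :=
      List.sum_take_add_sum_drop _ _
    have e4 : ((p.1.map (fun x : ℕ => (x : ℤ))).sum) = ((n.choose 2 : ℕ) : ℤ) := by
      rw [← Nat.cast_list_sum, hsum, hlen]
    have e5 : ((n - c : ℕ) : ℤ) = (n : ℤ) - c := by omega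
    rw [e1, e2, e4, e5] at hs1
    unfold C
    linear_combination (-1 : ℤ) * hs1 - e3
  -- prefix inequality in rot form
  have hprege : ∀ k ≤ n, C k ≤ ((rot aZ (n - c) ((p.2 : ℤ)) n).take k).sum := by
    intro k hk
    rw [← hrot, ← List.map_take, ← Nat.cast_list_sum]
    have := hpreN k hk
    unfold C
    exact_mod_cast this
  have hrd : (n - c) + c = n := by omega
  have hiZ : ((p.2 : ℕ) : ℤ) = (c : ℤ) - ((c : ℤ) - p.2) := by ring
  have hvalid : Valid aZ ((c : ℤ) - p.2) n (n - c) := by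
    refine ⟨by omega, argmin_of_prefix_ge hlenaZ hrd hiZ hQn hprege, ?_, ?_,
      last_of_split_le hlenaZ hrd hiZ hQn ?_⟩
    · have h1 : ((n - c : ℕ) : ℤ) = (n : ℤ) - c := by omega
      rw [h1]
      have h2 : (p.2 : ℤ) ≤ (n : ℤ) - 1 := by
        have : p.2 + 1 ≤ n := by omega
        exact_mod_cast by omega
      linarith
    · have h1 : ((n - c : ℕ) : ℤ) = (n : ℤ) - c := by omega
      rw [h1]
      have h2 : (0 : ℤ) ≤ (p.2 : ℤ) := by positivity
      linarith
    · intro k hk0 hkn hksum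
      rw [← hrot, ← List.map_take, ← Nat.cast_list_sum] at hksum
      unfold C at hksum
      have hnat : (p.1.take k).sum = k.choose 2 := by exact_mod_cast hksum
      have := hsplits k hk0 hkn hnat
      exact_mod_cast Nat.cast_le.2 this
  exact ⟨c, hcle, hQn, hvalid, hrot⟩

end Analyze

section Surj

lemma list_sum_sub_const (n : ℕ) (l : List ℕ) (i : ℕ) :
    (l.map (fun x : ℕ => (x : ZMod n) - (i : ZMod n))).sum
      = ((l.sum : ℕ) : ZMod n) - l.length • ((i : ℕ) : ZMod n) := by
  induction l with
  | nil => simp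
  | cons a t ih =>
      simp only [List.map_cons, List.sum_cons, ih, List.length_cons, List.sum_cons,
        Nat.cast_add, succ_nsmul]
      ring

lemma exists_q {n : ℕ} (hn : 1 ≤ n) {M : Multiset (ZMod n)} (hM : M ∈ EGZset n)
    {a0 : List ℕ} (ha0 : (↑a0 : Multiset ℕ) = M.map ZMod.val) (hlen : a0.length = n) :
    ∃ q : ℤ, Qf (a0.map (fun x : ℕ => (x : ℤ))) q n = 0 := by
  haveI : NeZero n := ⟨by omega⟩
  have hsum0 : ((a0.sum : ℕ) : ZMod n) = ((n.choose 2 : ℕ) : ZMod n) := by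
    have h1 : (↑a0 : Multiset ℕ).sum = (M.map ZMod.val).sum := by rw [ha0]
    rw [Multiset.sum_coe] at h1
    have h2 : (((M.map ZMod.val).sum : ℕ) : ZMod n) = M.sum := by
      rw [Nat.cast_multiset_sum, Multiset.map_map]
      have h4 : Multiset.map ((Nat.cast : ℕ → ZMod n) ∘ ZMod.val) M = Multiset.map id M :=
        Multiset.map_congr rfl (fun x _ => ZMod.natCast_rightInverse x)
      rw [h4, Multiset.map_id]
    rw [h1, h2, hM.2]
  have hdvd : (n : ℤ) ∣ ((a0.sum : ℤ) - ((n.choose 2 : ℕ) : ℤ)) := by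
    have hz : ((((a0.sum : ℤ) - ((n.choose 2 : ℕ) : ℤ)) : ℤ) : ZMod n) = 0 := by
      rw [Int.cast_sub, Int.cast_natCast, Int.cast_natCast, hsum0]
      exact sub_self _
    exact (ZMod.intCast_zmod_eq_zero_iff_dvd _ _).1 hz
  obtain ⟨q, hq⟩ := hdvd
  refine ⟨q, ?_⟩
  unfold Qf C
  rw [List.take_of_length_le (by rw [List.length_map, hlen])]
  have hcast : ((a0.map (fun x : ℕ => (x : ℤ))).sum) = ((a0.sum : ℕ) : ℤ) :=
    (Nat.cast_list_sum a0).symm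
  rw [hcast]
  linarith [hq]

lemma exists_preimage {n : ℕ} (hn : 1 ≤ n) {M : Multiset (ZMod n)} (hM : M ∈ EGZset n) :
    ∃ p : List ℕ × ℕ, p ∈ Lset n ∧
      (↑(p.1.map (fun x : ℕ => (x : ZMod n) - (p.2 : ZMod n))) : Multiset (ZMod n)) = M := by
  haveI : NeZero n := ⟨by omega⟩
  set a0 : List ℕ := Multiset.sort (M.map ZMod.val) (· ≤ ·) with ha0def
  have ha0 : (↑a0 : Multiset ℕ) = M.map ZMod.val := Multiset.sort_eq _ _
  have hsort0 : a0.Pairwise (· ≤ ·) := Multiset.pairwise_sort _ _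
  have hlen : a0.length = n := by
    rw [ha0def, Multiset.length_sort, Multiset.card_map, hM.1]
  have hbdN : ∀ x ∈ a0, x < n := by
    intro x hx
    have : x ∈ M.map ZMod.val := by rw [← ha0]; exact hx
    obtain ⟨y, _, rfl⟩ := Multiset.mem_map.1 this
    exact ZMod.val_lt y
  set aZ : List ℤ := a0.map (fun x : ℕ => (x : ℤ)) with haZ
  have hlenZ : aZ.length = n := by rw [haZ, List.length_map, hlen]
  have hsortZ : aZ.Pairwise (· ≤ ·) := by
    refine List.Pairwise.map _ ?_ hsort0
    intro x y h
    exact_mod_cast h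
  have hbd0 : ∀ x ∈ aZ, 0 ≤ x := by
    intro x hx
    obtain ⟨y, _, rfl⟩ := List.mem_map.1 hx
    positivity
  have hbd1 : ∀ x ∈ aZ, x ≤ (n : ℤ) - 1 := by
    intro x hx
    obtain ⟨y, hy, rfl⟩ := List.mem_map.1 hx
    have := hbdN y hy
    omega
  obtain ⟨q, hQn⟩ := exists_q hn hM ha0 hlen
  obtain ⟨r, hv⟩ := valid_exists hn hlenZ hbd0 hbd1 hQn
  set d : ℕ := n - r with hd
  have hrd : r + d = n := by have := hv.hr; omega
  set iZ : ℤ := (d : ℤ) - q with hiZdef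
  have hi0 : 0 ≤ iZ := by
    have := hv.ub
    have hc : ((d : ℕ) : ℤ) = (n : ℤ) - r := by omega
    rw [hiZdef]
    linarith
  set iN : ℕ := iZ.toNat with hiNdef
  have hiN : (iN : ℤ) = iZ := Int.toNat_of_nonneg hi0
  obtain ⟨hscore, hlenS, hsplitS⟩ :=
    rot_score hn hsortZ hlenZ hbd0 hbd1 hrd rfl hQn hv
  have hi_le : iN ≤ n - 1 := by
    have hlb := hv.lb
    have hc : ((d : ℕ) : ℤ) = (n : ℤ) - r := by omega
    have : iZ ≤ (n : ℤ) - 1 := by rw [hiZdef]; linarith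
    omega
  have hmem : ((rot aZ r iZ n).map Int.toNat, iN) ∈ Lset n := by
    refine Lset_mk hn hscore hlenS hi_le ?_
    intro k hk0 hkn hksum
    have := hsplitS k hk0 hkn hksum
    omega
  refine ⟨((rot aZ r iZ n).map Int.toNat, iN), hmem, ?_⟩
  -- value computation
  have hb := rot_entry_bounds hn hsortZ hlenZ hbd0 hbd1 hrd rfl hv
  have hcastiN : ((iN : ℕ) : ZMod n) = ((iZ : ℤ) : ZMod n) := by
    rw [← hiN]
    simp
  have step1 : ((rot aZ r iZ n).map Int.toNat).map (fun x : ℕ => (x : ZMod n) - (iN : ZMod n))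
      = (rot aZ r iZ n).map (fun z : ℤ => (z : ZMod n) - ((iZ : ℤ) : ZMod n)) := by
    rw [List.map_map]
    refine List.map_congr_left ?_
    intro z hz
    have h0 := (hb z hz).1
    simp only [Function.comp_apply]
    rw [hcastiN, ← Int.toNat_of_nonneg h0]
    simp
  have step2 : (rot aZ r iZ n).map (fun z : ℤ => (z : ZMod n) - ((iZ : ℤ) : ZMod n))
      = (aZ.drop r).map (fun z : ℤ => (z : ZMod n))
        ++ (aZ.take r).map (fun z : ℤ => (z : ZMod n)) := by
    rw [rot, List.map_append, List.map_map, List.map_map]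
    congr 1
    · refine List.map_congr_left ?_
      intro z hz
      simp only [Function.comp_apply]
      push_cast
      ring_nf
      rw [ZMod.natCast_self]
      ring
    · refine List.map_congr_left ?_
      intro z hz
      simp only [Function.comp_apply]
      push_cast
      ring
  rw [step1, step2]
  have step3 : (↑((aZ.drop r).map (fun z : ℤ => (z : ZMod n))
        ++ (aZ.take r).map (fun z : ℤ => (z : ZMod n))) : Multiset (ZMod n))
      = Multiset.map (fun z : ℤ => (z : ZMod n)) ↑(aZ.take r ++ aZ.drop r) := by
    rw [← List.map_append, Multiset.map_coe, Multiset.coe_eq_coe]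
    exact (List.perm_append_comm).map _
  rw [step3, List.take_append_drop]
  -- now: map (cast ∘ cast) over a0
  rw [haZ, Multiset.map_coe, List.map_map]
  have step4 : a0.map ((fun z : ℤ => (z : ZMod n)) ∘ (fun x : ℕ => (x : ℤ)))
      = a0.map (fun x : ℕ => (x : ZMod n)) := by
    refine List.map_congr_left ?_
    intro x hx
    simp
  rw [step4, ← Multiset.map_coe, ha0, Multiset.map_map]
  have h4 : Multiset.map ((fun x : ℕ => (x : ZMod n)) ∘ ZMod.val) M = Multiset.map id M :=
    Multiset.map_congr rfl (fun x _ => ZMod.natCast_rightInverse x)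
  rw [h4, Multiset.map_id]

end Surj

end EGZaux

/-- The map `f(s, i) = μ(s - i)` is a bijection from `L_n` onto `EGZ_n`, and the
multiplicity of `0` in `f(s,i)` equals the number of indices `j` with `s_j = i`. -/
theorem lastSummand_bijection (n : ℕ) (hn : 1 ≤ n) :
    Set.BijOn
      (fun p : List ℕ × ℕ =>
        Multiset.map (fun x => ((x : ZMod n) - (p.2 : ZMod n))) (↑p.1 : Multiset ℕ))
      (Lset n) (EGZset n) ∧
    ∀ p ∈ Lset n,
      Multiset.count (0 : ZMod n)
        (Multiset.map (fun x => ((x : ZMod n) - (p.2 : ZMod n))) (↑p.1 : Multiset ℕ)) =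
      p.1.count p.2 := by
  classical
  haveI : NeZero n := ⟨by omega⟩
  open EGZaux in
  set f : List ℕ × ℕ → Multiset (ZMod n) :=
    fun p => Multiset.map (fun x => ((x : ZMod n) - (p.2 : ZMod n))) (↑p.1 : Multiset ℕ)
    with hfdef
  have hfval : ∀ p : List ℕ × ℕ,
      f p = ↑(p.1.map (fun x : ℕ => (x : ZMod n) - (p.2 : ZMod n))) :=
    fun p => EGZaux.fmap_norm p.1 p.2
  have hmaps : ∀ p ∈ Lset n, f p ∈ EGZset n := by
    intro p hp
    obtain ⟨⟨hsort, hbd, hpre, hsum⟩, hlen, _⟩ := hp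
    rw [hfval p]
    refine ⟨?_, ?_⟩
    · rw [Multiset.coe_card, List.length_map, hlen]
    · rw [Multiset.sum_coe, EGZaux.list_sum_sub_const n p.1 p.2, hsum, hlen]
      have hz : n • ((p.2 : ℕ) : ZMod n) = 0 := by
        rw [nsmul_eq_mul, ZMod.natCast_self, zero_mul]
      rw [hz, sub_zero]
  have hinj : Set.InjOn f (Lset n) := by
    intro p hp p' hp' heq
    set a0 : List ℕ := Multiset.sort ((f p).map ZMod.val) (· ≤ ·) with ha0def
    have hsort0 : a0.Pairwise (· ≤ ·) := Multiset.pairwise_sort _ _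
    have hvalmap : ∀ pp : List ℕ × ℕ, (f pp).map ZMod.val
        = ↑(pp.1.map (fun x : ℕ => ((x : ZMod n) - (pp.2 : ZMod n)).val)) := by
      intro pp
      rw [hfval pp, Multiset.map_coe, List.map_map]
      rfl
    have ha0p : (↑a0 : Multiset ℕ)
        = ↑(p.1.map (fun x : ℕ => ((x : ZMod n) - (p.2 : ZMod n)).val)) := by
      rw [ha0def, Multiset.sort_eq, hvalmap]
    have ha0p' : (↑a0 : Multiset ℕ)
        = ↑(p'.1.map (fun x : ℕ => ((x : ZMod n) - (p'.2 : ZMod n)).val)) := by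
      rw [ha0def, Multiset.sort_eq, heq, hvalmap]
    obtain ⟨c, hc, hQ, hV, hR⟩ := EGZaux.analyze hn hp hsort0 ha0p
    obtain ⟨c', hc', hQ', hV', hR'⟩ := EGZaux.analyze hn hp' hsort0 ha0p'
    have hqq : (c : ℤ) - p.2 = (c' : ℤ) - p'.2 := EGZaux.Qf_q_unique hn hQ hQ'
    rw [← hqq] at hV'
    have hrr : n - c = n - c' := EGZaux.valid_unique hn hQ hV hV'
    have hcc : c = c' := by omega
    have hii : p.2 = p'.2 := by omega
    have h1 : p.1.map (fun x : ℕ => (x : ℤ)) = p'.1.map (fun x : ℕ => (x : ℤ)) := by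
      rw [hR, hR', hcc, hii]
    have h2 : p.1 = p'.1 := by
      have hinjc : Function.Injective (fun x : ℕ => (x : ℤ)) := fun a b hab => by
        simpa using hab
      exact List.map_injective_iff.2 hinjc h1
    exact Prod.ext h2 hii
  have hsurj : Set.SurjOn f (Lset n) (EGZset n) := by
    intro M hM
    obtain ⟨p, hpL, hpv⟩ := EGZaux.exists_preimage hn hM
    exact ⟨p, hpL, by rw [hfval p]; exact hpv⟩
  refine ⟨⟨hmaps, hinj, hsurj⟩, ?_⟩
  intro p hp
  have hcount : Multiset.count (0 : ZMod n) (f p) = p.1.count p.2 := by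
    obtain ⟨⟨hsort, hbd, hpre, hsum⟩, hlen, u, t, _, _, _, _, hi2⟩ := hp
    have hp2n : p.2 < n := by omega
    rw [hfval p, ← Multiset.map_coe, Multiset.count_map,
      show (p.1.count p.2) = Multiset.count p.2 (↑p.1 : Multiset ℕ) from
        (Multiset.coe_count _ _).symm,
      Multiset.count_eq_card_filter_eq]
    congr 1
    refine Multiset.filter_congr ?_
    intro x hx
    have hxn : x < n := by
      rw [← hlen]
      exact hbd x (Multiset.mem_coe.1 hx)
    constructor
    · intro h0
      have hxy : (x : ZMod n) = (p.2 : ZMod n) := by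
        have := sub_eq_zero.1 h0.symm
        exact this
      have hval := congrArg ZMod.val hxy
      rw [ZMod.val_cast_of_lt hxn, ZMod.val_cast_of_lt hp2n] at hval
      exact hval.symm
    · intro h
      rw [← h]
      exact (sub_self _).symm
  exact hcount
end

section
/- The number of multisets of size n-1 with elements in Z/nZ whose sum is congruent to binomial(n,2) modulo n equals the Catalan number C_{n-1} = binomial(2n-2, n-1)/n. -/
private lemma sum_map_add_const {n : ℕ} (M : Multiset (ZMod n)) (c : ZMod n) :
    (M.map (· + c)).sum = M.sum + (Multiset.card M : ZMod n) * c := by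
  induction M using Multiset.induction with
  | empty => simp
  | cons a s ih => simp [ih]; ring

/-- The number of multisets of size `n-1` over `ZMod n` with sum `binom n 2` is the
Catalan number `C_{n-1}`. -/
theorem egz_sub_one_card_eq_catalan (n : ℕ) (hn : 1 ≤ n) :
    Nat.card {M : Multiset (ZMod n) //
        Multiset.card M = n - 1 ∧ M.sum = (n.choose 2 : ZMod n)} =
      catalan (n - 1) := by
  have : NeZero n := ⟨by omega⟩
  set T : ZMod n := (n.choose 2 : ZMod n) with hT
  have hcast : ((n - 1 : ℕ) : ZMod n) = -1 := by
    rw [Nat.cast_sub hn, ZMod.natCast_self]; simp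
  -- key : mapping by (·+c) shifts the sum by -c on multisets of card n-1
  have hsum : ∀ (M : Multiset (ZMod n)), Multiset.card M = n - 1 → ∀ c : ZMod n,
      (M.map (· + c)).sum = M.sum - c := by
    intro M hM c
    rw [sum_map_add_const, hM, hcast]; ring
  -- equivalence
  let e : {M : Multiset (ZMod n) //
      Multiset.card M = n - 1 ∧ M.sum = T} × ZMod n ≃ Sym (ZMod n) (n - 1) :=
    { toFun := fun p => ⟨p.1.1.map (· + p.2), by simp [p.1.2.1]⟩
      invFun := fun s => (⟨s.1.map (· + (s.1.sum - T)), by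
          constructor
          · simpa using s.2
          · rw [hsum _ (by simpa using s.2)]; ring⟩,
        T - s.1.sum)
      left_inv := by
        rintro ⟨⟨M, hc, hs⟩, c⟩
        have h1 : (M.map (· + c)).sum = T - c := by rw [hsum M hc c, hs]
        ext1
        · ext1
          simp only [h1, Multiset.map_map, Function.comp]
          rw [show T - c - T = -c by ring]
          have : ∀ x : ZMod n, x + c + -c = x := fun x => by ring
          simp [this]
        · simp [h1]
      right_inv := by
        rintro ⟨s, hs⟩
        ext1
        simp only [Multiset.map_map, Function.comp]
        have : ∀ x : ZMod n, x + (s.sum - T) + (T - s.sum) = x := fun x => by ring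
        simp [this] }
  have hcard : Nat.card ({M : Multiset (ZMod n) //
      Multiset.card M = n - 1 ∧ M.sum = T} × ZMod n) = Nat.card (Sym (ZMod n) (n - 1)) :=
    Nat.card_congr e
  have hSym : Nat.card (Sym (ZMod n) (n - 1)) = (n + (n - 1) - 1).choose (n - 1) := by
    rw [Nat.card_eq_fintype_card, Sym.card_sym_eq_choose, ZMod.card]
  rw [Nat.card_prod, Nat.card_zmod, hSym] at hcard
  have harith : (n + (n - 1) - 1) = 2 * (n - 1) := by omega
  rw [harith] at hcard
  have hcat : n * catalan (n - 1) = (2 * (n - 1)).choose (n - 1) := by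
    have h := succ_mul_catalan_eq_centralBinom (n - 1)
    rw [Nat.centralBinom, show n - 1 + 1 = n by omega] at h
    exact h
  have : Nat.card {M : Multiset (ZMod n) //
      Multiset.card M = n - 1 ∧ M.sum = T} * n = n * catalan (n - 1) := by
    rw [hcard, hcat]
  have hn0 : 0 < n := hn
  nlinarith [this]
end

section
/- Let (a_n)_{n≥0} and (b_n)_{n≥1} satisfy a_0 = 1 and n·a_n = Σ_{k=1}^{n} a_{n-k} b_k for all n ≥ 1. Then a_n = Σ over all (m_1,...,m_n) with 1·m_1 + 2·m_2 + ... + n·m_n = n of Π_{j=1}^{n} b_j^{m_j} / (j^{m_j} · m_j!). -/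
open Finset

section Aux

variable {R : Type*} [CommRing R] [Algebra ℚ R]

private def pterm (b : ℕ → R) (N : ℕ) (m : Fin N → ℕ) : R :=
  (∏ j, b (j.val + 1) ^ m j) *
    algebraMap ℚ R (∏ j : Fin N,
      (((j.val + 1 : ℕ) : ℚ) ^ m j * (Nat.factorial (m j) : ℚ))⁻¹)

private def pset (N n : ℕ) : Finset (Fin N → ℕ) :=
  (Fintype.piFinset fun _ : Fin N => Finset.range (N + 1)).filter
    (fun m => ∑ j, (j.val + 1) * m j = n)

private lemma mem_pset {N n : ℕ} (hn : n ≤ N) {m : Fin N → ℕ} :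
    m ∈ pset N n ↔ ∑ j, (j.val + 1) * m j = n := by
  constructor
  · exact fun h => (Finset.mem_filter.1 h).2
  · intro h
    refine Finset.mem_filter.2 ⟨Fintype.mem_piFinset.2 fun j => Finset.mem_range.2 ?_, h⟩
    have hle : (j.val + 1) * m j ≤ n :=
      h ▸ Finset.single_le_sum (f := fun i : Fin N => (i.val + 1) * m i)
        (fun i _ => Nat.zero_le _) (Finset.mem_univ j)
    have h2 : m j ≤ (j.val + 1) * m j := Nat.le_mul_of_pos_left _ (Nat.succ_pos _)
    omega

private lemma pset_zero (N : ℕ) : pset N 0 = {fun _ => 0} := by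
  ext m
  simp only [Finset.mem_singleton]
  rw [mem_pset (Nat.zero_le N)]
  constructor
  · intro h
    funext j
    have hle : (j.val + 1) * m j ≤ 0 :=
      h ▸ Finset.single_le_sum (f := fun i : Fin N => (i.val + 1) * m i)
        (fun i _ => Nat.zero_le _) (Finset.mem_univ j)
    have h2 : m j ≤ (j.val + 1) * m j := Nat.le_mul_of_pos_left _ (Nat.succ_pos _)
    omega
  · intro h; subst h; simp

private lemma pterm_zero (b : ℕ → R) (N : ℕ) : pterm b N (fun _ => 0) = 1 := by
  simp [pterm]

private lemma key_s14 (b : ℕ → R) {N n : ℕ} (hN : n ≤ N) :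
    (n : R) * ∑ m ∈ pset N n, pterm b N m =
      ∑ k ∈ Finset.Icc 1 n, (∑ m ∈ pset N (n - k), pterm b N m) * b k := by
  rw [Finset.mul_sum]
  have lhs_eq : ∀ m ∈ pset N n, (n : R) * pterm b N m
      = ∑ j : Fin N, (((j.val + 1) * m j : ℕ) : R) * pterm b N m := by
    intro m hm
    rw [← Finset.sum_mul]
    congr 1
    rw [← Nat.cast_sum]
    exact_mod_cast congrArg (Nat.cast (R := R)) ((mem_pset hN).1 hm).symm
  rw [Finset.sum_congr rfl lhs_eq, Finset.sum_comm]
  have rhs_eq : ∑ k ∈ Finset.Icc 1 n, (∑ m ∈ pset N (n - k), pterm b N m) * b k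
      = ∑ j : Fin N, if j.val + 1 ≤ n then
          (∑ m ∈ pset N (n - (j.val + 1)), pterm b N m) * b (j.val + 1) else 0 := by
    rw [Fin.sum_univ_eq_sum_range
      (fun j => if j + 1 ≤ n then
        (∑ m ∈ pset N (n - (j + 1)), pterm b N m) * b (j + 1) else 0)]
    rw [← Finset.Ico_add_one_right_eq_Icc, Finset.sum_Ico_eq_sum_range]
    rw [← Finset.sum_subset (Finset.range_subset_range.2 hN)]
    · refine Finset.sum_congr rfl fun i hi => ?_
      rw [Finset.mem_range] at hi
      rw [if_pos (by omega), Nat.add_comm 1 i]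
    · intro i _ hi
      rw [Finset.mem_range] at hi
      rw [if_neg (by omega)]
  rw [rhs_eq]
  refine Finset.sum_congr rfl fun j _ => ?_
  by_cases hk : j.val + 1 ≤ n
  · rw [if_pos hk]
    set k := j.val + 1 with hkdef
    -- restrict to m with m j ≠ 0
    rw [← Finset.sum_filter_of_ne (p := fun m => m j ≠ 0)
      (by intro m _ hne; by_contra h; simp [h] at hne)]
    rw [Finset.sum_mul]
    refine Finset.sum_nbij' (i := fun m => Function.update m j (m j - 1))
      (j := fun m => Function.update m j (m j + 1)) ?_ ?_ ?_ ?_ ?_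
    · intro m hm
      rw [Finset.mem_filter] at hm
      obtain ⟨hm1, hm2⟩ := hm
      have hsum := (mem_pset hN).1 hm1
      obtain ⟨t, ht⟩ : ∃ t, m j = t + 1 := ⟨m j - 1, by omega⟩
      rw [mem_pset (by omega)]
      beta_reduce
      rw [← Finset.add_sum_erase _ _ (Finset.mem_univ j)] at hsum
      rw [← Finset.add_sum_erase _ _ (Finset.mem_univ j)]
      simp only [Function.update_self]
      rw [Finset.sum_congr rfl (fun i hi => by
        rw [Function.update_of_ne (Finset.mem_erase.1 hi).1])]
      rw [ht] at hsum ⊢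
      rw [Nat.mul_add, Nat.mul_one] at hsum
      simp only [Nat.add_sub_cancel]
      omega
    · intro m hm
      have hsum := (mem_pset (by omega : n - k ≤ N)).1 hm
      rw [Finset.mem_filter]
      constructor
      · rw [mem_pset hN]
        beta_reduce
        rw [← Finset.add_sum_erase _ _ (Finset.mem_univ j)] at hsum
        rw [← Finset.add_sum_erase _ _ (Finset.mem_univ j)]
        simp only [Function.update_self]
        rw [Finset.sum_congr rfl (fun i hi => by
          rw [Function.update_of_ne (Finset.mem_erase.1 hi).1])]
        rw [Nat.mul_add, Nat.mul_one]
        omega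
      · simp [Function.update_self]
    · intro m hm
      rw [Finset.mem_filter] at hm
      funext i
      rcases eq_or_ne i j with rfl | hij
      · simp only [Function.update_self]
        have := hm.2
        omega
      · simp [Function.update_of_ne hij]
    · intro m _
      funext i
      rcases eq_or_ne i j with rfl | hij
      · simp [Function.update_self]
      · simp [Function.update_of_ne hij]
    · intro m hm
      rw [Finset.mem_filter] at hm
      obtain ⟨hm1, hm2⟩ := hm
      obtain ⟨t, ht⟩ : ∃ t, m j = t + 1 := ⟨m j - 1, by omega⟩
      beta_reduce
      have e1 : ∏ i : Fin N, b (i.val + 1) ^ m i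
          = b k ^ (t + 1) * ∏ i ∈ Finset.univ.erase j, b (i.val + 1) ^ m i := by
        rw [← Finset.mul_prod_erase _ _ (Finset.mem_univ j), ht]
      have e2 : ∏ i : Fin N, b (i.val + 1) ^ (Function.update m j (m j - 1)) i
          = b k ^ t * ∏ i ∈ Finset.univ.erase j, b (i.val + 1) ^ m i := by
        rw [← Finset.mul_prod_erase _ _ (Finset.mem_univ j), Function.update_self, ht]
        simp only [Nat.add_sub_cancel]
        congr 1
        exact Finset.prod_congr rfl fun i hi => by
          rw [Function.update_of_ne (Finset.mem_erase.1 hi).1]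
      have e3 : ∏ i : Fin N, (((i.val + 1 : ℕ) : ℚ) ^ m i * (Nat.factorial (m i) : ℚ))⁻¹
          = (((k : ℕ) : ℚ) ^ (t + 1) * (Nat.factorial (t + 1) : ℚ))⁻¹ *
            ∏ i ∈ Finset.univ.erase j,
              (((i.val + 1 : ℕ) : ℚ) ^ m i * (Nat.factorial (m i) : ℚ))⁻¹ := by
        rw [← Finset.mul_prod_erase _ _ (Finset.mem_univ j), ht]
      have e4 : ∏ i : Fin N, (((i.val + 1 : ℕ) : ℚ) ^ (Function.update m j (m j - 1)) i *
            (Nat.factorial ((Function.update m j (m j - 1)) i) : ℚ))⁻¹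
          = (((k : ℕ) : ℚ) ^ t * (Nat.factorial t : ℚ))⁻¹ *
            ∏ i ∈ Finset.univ.erase j,
              (((i.val + 1 : ℕ) : ℚ) ^ m i * (Nat.factorial (m i) : ℚ))⁻¹ := by
        rw [← Finset.mul_prod_erase _ _ (Finset.mem_univ j), Function.update_self, ht]
        simp only [Nat.add_sub_cancel]
        congr 1
        exact Finset.prod_congr rfl fun i hi => by
          rw [Function.update_of_ne (Finset.mem_erase.1 hi).1]
      simp only [pterm]
      rw [e1, e2, e3, e4, map_mul, map_mul, ht]
      have hq : algebraMap ℚ R (((k : ℕ) : ℚ) ^ t * (Nat.factorial t : ℚ))⁻¹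
          = (((k * (t + 1) : ℕ)) : R) *
            algebraMap ℚ R (((k : ℕ) : ℚ) ^ (t + 1) * (Nat.factorial (t + 1) : ℚ))⁻¹ := by
        rw [← map_natCast (algebraMap ℚ R), ← map_mul]
        congr 1
        have hk0 : ((k : ℕ) : ℚ) ≠ 0 := by positivity
        have hf0 : (Nat.factorial t : ℚ) ≠ 0 := Nat.cast_ne_zero.2 (Nat.factorial_ne_zero t)
        rw [Nat.factorial_succ]
        push_cast
        field_simp
        ring
      rw [hq]
      ring
  · rw [if_neg hk]
    refine Finset.sum_eq_zero fun m hm => ?_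
    have hsum := (mem_pset hN).1 hm
    have hle : (j.val + 1) * m j ≤ n :=
      hsum ▸ Finset.single_le_sum (f := fun i : Fin N => (i.val + 1) * m i)
        (fun i _ => Nat.zero_le _) (Finset.mem_univ j)
    have hmj : m j = 0 := by
      by_contra h
      have h1 : 1 ≤ m j := Nat.one_le_iff_ne_zero.2 h
      have : j.val + 1 ≤ (j.val + 1) * m j := Nat.le_mul_of_pos_right _ (by omega)
      omega
    simp [hmj]

end Aux

/-- If `a₀ = 1` and `n·aₙ = ∑_{k=1}^n a_{n-k} b_k`, then
`aₙ = ∑_{∑ j·m_j = n} ∏_j b_j^{m_j} / (j^{m_j}·m_j!)`. -/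
theorem log_pointing_partition_formula {R : Type*} [CommRing R] [Algebra ℚ R]
    (a b : ℕ → R) (h0 : a 0 = 1)
    (hrec : ∀ n, 1 ≤ n → n • a n = ∑ k ∈ Finset.Icc 1 n, a (n - k) * b k)
    (n : ℕ) (hn : 1 ≤ n) :
    a n = ∑ m ∈ (Fintype.piFinset fun _ : Fin n => Finset.range (n + 1)).filter
        (fun m => ∑ j, (j.val + 1) * m j = n),
      (∏ j, b (j.val + 1) ^ m j) *
        algebraMap ℚ R (∏ j : Fin n,
          (((j.val + 1 : ℕ) : ℚ) ^ m j * (Nat.factorial (m j) : ℚ))⁻¹) := by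
  have main : ∀ M : ℕ, M ≤ n → a M = ∑ m ∈ pset n M, pterm b n m := by
    intro M
    induction M using Nat.strong_induction_on with
    | _ M ih =>
      intro hMn
      rcases Nat.eq_zero_or_pos M with rfl | hpos
      · rw [h0, pset_zero, Finset.sum_singleton, pterm_zero]
      · have h2 := hrec M hpos
        rw [nsmul_eq_mul] at h2
        have h3 : ∑ k ∈ Finset.Icc 1 M, a (M - k) * b k
            = ∑ k ∈ Finset.Icc 1 M, (∑ m ∈ pset n (M - k), pterm b n m) * b k := by
          refine Finset.sum_congr rfl fun k hk => ?_
          rw [Finset.mem_Icc] at hk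
          rw [ih (M - k) (by omega) (by omega)]
        rw [h3, ← key_s14 b hMn] at h2
        have hu : IsUnit ((M : ℕ) : R) := by
          have h4 : IsUnit ((M : ℕ) : ℚ) :=
            isUnit_iff_ne_zero.2 (Nat.cast_ne_zero.2 (by omega))
          have := h4.map (algebraMap ℚ R)
          rwa [map_natCast] at this
        exact hu.mul_left_cancel h2
  exact main n le_rfl
end
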